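/- arXiv:2105.01020 — 7 statements merged into one kernel-verified Lean document; each statement's English description precedes it below -/
import Mathlib

section
/- Let K be a field of characteristic 0, 𝔮 a Lie algebra over K, and p_1, p_2 ∈ K[t] monic of degree n ≥ 2 with deg(p_1 − p_2) ≤ 1. For a, b ∈ K let β be the bilinear map on K[t] ⊗_K 𝔮 determined by β(f⊗x, g⊗y) = a·((fg) %ₘ p_1) ⊗ [x,y] + b·((fg) %ₘ p_2) ⊗ [x,y]. Then for all x, y, z ∈ 𝔮 and all f, g, h ∈ K[t] of degree < n, the Jacobi cyclic sum vanishes: β(β(f⊗x, g⊗y), h⊗z) + β(β(g⊗y, h⊗z), f⊗x) + β(β(h⊗z, f⊗x), g⊗y) = 0. (In other words, all linear combinations of the two Lie brackets [ , ]_{p_1} and [ , ]_{p_2} on 𝔮[t]/(p_i), transported to the space of polynomials of degree < n, are again Lie brackets: the two brackets are compatible.) -/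
open TensorProduct Polynomial

section Aux

variable {K : Type*} [Field K]

lemma my_degree_le_of_lt {f : Polynomial K} {m : ℕ} (h : f.degree < ((m + 1 : ℕ) : WithBot ℕ)) :
    f.degree ≤ (m : WithBot ℕ) := by
  cases hd : f.degree with
  | bot => exact bot_le
  | coe k =>
    rw [hd, Nat.cast_withBot] at h
    rw [Nat.cast_withBot]
    exact WithBot.coe_le_coe.2 (Nat.lt_succ_iff.1 (WithBot.coe_lt_coe.1 h))

lemma my_mod_mul_mod {p : Polynomial K} (hp : p.Monic) (u v : Polynomial K) :
    (u %ₘ p * v) %ₘ p = (u * v) %ₘ p := by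
  conv_lhs => rw [modByMonic_eq_sub_mul_div u p]
  rw [sub_mul, sub_modByMonic, mul_assoc,
    (modByMonic_eq_zero_iff_dvd hp).2 (dvd_mul_right _ _), sub_zero]

lemma my_key {n : ℕ} (hn : 2 ≤ n) {p₁ p₂ : Polynomial K} (h₁ : p₁.Monic) (h₂ : p₂.Monic)
    (hd₁ : p₁.natDegree = n) (hd₂ : p₂.natDegree = n)
    (hdiff : (p₁ - p₂).degree ≤ 1)
    {f g h : Polynomial K}
    (hf : f.degree ≤ ((n - 1 : ℕ) : WithBot ℕ))
    (hg : g.degree ≤ ((n - 1 : ℕ) : WithBot ℕ))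
    (hh : h.degree ≤ ((n - 1 : ℕ) : WithBot ℕ)) :
    ((f * g) %ₘ p₂ * h) %ₘ p₁ + ((f * g) %ₘ p₁ * h) %ₘ p₂
      = (f * g * h) %ₘ p₁ + (f * g * h) %ₘ p₂
        - (f * g * h * (p₁ - p₂)) /ₘ (p₁ * p₁) * (p₁ - p₂) := by
  have hp1d : p₁.degree = (n : WithBot ℕ) := by
    rw [degree_eq_natDegree h₁.ne_zero, hd₁]
  have hp2d : p₂.degree = (n : WithBot ℕ) := by
    rw [degree_eq_natDegree h₂.ne_zero, hd₂]
  set d : Polynomial K := p₁ - p₂ with hd_def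
  set q : Polynomial K := (f * g) /ₘ p₁ with hq_def
  set r : Polynomial K := (f * g) %ₘ p₁ with hr_def
  have hfg : f * g = q * p₁ + r := by
    have h0 := modByMonic_add_div (f * g) p₁
    rw [← hq_def, ← hr_def] at h0
    linear_combination -h0
  -- degree bounds
  have hfn : f.natDegree ≤ n - 1 := natDegree_le_of_degree_le hf
  have hgn : g.natDegree ≤ n - 1 := natDegree_le_of_degree_le hg
  have hhn : h.natDegree ≤ n - 1 := natDegree_le_of_degree_le hh
  have hdn : d.natDegree ≤ 1 := natDegree_le_of_degree_le hdiff
  have hqn : q.natDegree ≤ n - 2 := by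
    rw [hq_def, natDegree_divByMonic _ h₁, hd₁]
    have := natDegree_mul_le (p := f) (q := g)
    omega
  have hrd : r.degree < (n : WithBot ℕ) := by
    rw [hr_def, ← hp1d]; exact degree_modByMonic_lt _ h₁
  have hqd : q.degree ≤ ((n - 2 : ℕ) : WithBot ℕ) :=
    le_trans degree_le_natDegree (by exact_mod_cast hqn)
  have hqdd : (q * d).degree ≤ ((n - 1 : ℕ) : WithBot ℕ) := by
    refine le_trans (degree_mul_le _ _) (le_trans (add_le_add hqd hdiff) ?_)
    have : ((n - 2 : ℕ) : WithBot ℕ) + (1 : WithBot ℕ) = ((n - 2 + 1 : ℕ) : WithBot ℕ) := by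
      push_cast; ring
    rw [this]
    exact_mod_cast Nat.le_of_eq (by omega)
  have hn1n : ((n - 1 : ℕ) : WithBot ℕ) < (n : WithBot ℕ) := by exact_mod_cast by omega
  -- remainder mod p₂ is r + q*d
  have hmod2 : (f * g) %ₘ p₂ = r + q * d ∧ (f * g) /ₘ p₂ = q := by
    have := div_modByMonic_unique (f := f * g) q (r + q * d) h₂
      ⟨by rw [hfg, hd_def]; ring,
       by
        rw [hp2d]
        exact lt_of_le_of_lt (degree_add_le _ _)
          (max_lt hrd (lt_of_le_of_lt hqdd hn1n))⟩
    exact ⟨this.2, this.1⟩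
  -- second division: u = q*d*h
  set u : Polynomial K := q * d * h with hu_def
  set s : Polynomial K := u /ₘ p₁ with hs_def
  set t : Polynomial K := u %ₘ p₁ with ht_def
  have hu : u = s * p₁ + t := by
    have h0 := modByMonic_add_div u p₁
    rw [← hs_def, ← ht_def] at h0
    linear_combination -h0
  have hun : u.natDegree ≤ 2 * n - 2 := by
    rw [hu_def]
    have h1 := natDegree_mul_le (p := q * d) (q := h)
    have h2 := natDegree_mul_le (p := q) (q := d)
    omega
  have hsn : s.natDegree ≤ n - 2 := by
    rw [hs_def, natDegree_divByMonic _ h₁, hd₁]; omega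
  have hsd : s.degree ≤ ((n - 2 : ℕ) : WithBot ℕ) :=
    le_trans degree_le_natDegree (by exact_mod_cast hsn)
  have hsdd : (s * d).degree ≤ ((n - 1 : ℕ) : WithBot ℕ) := by
    refine le_trans (degree_mul_le _ _) (le_trans (add_le_add hsd hdiff) ?_)
    have : ((n - 2 : ℕ) : WithBot ℕ) + (1 : WithBot ℕ) = ((n - 2 + 1 : ℕ) : WithBot ℕ) := by
      push_cast; ring
    rw [this]
    exact_mod_cast Nat.le_of_eq (by omega)
  have htd : t.degree < (n : WithBot ℕ) := by
    rw [ht_def, ← hp1d]; exact degree_modByMonic_lt _ h₁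
  have hmodu : u %ₘ p₂ = t + s * d := by
    exact (div_modByMonic_unique (f := u) s (t + s * d) h₂
      ⟨by rw [hu, hd_def]; ring,
       by
        rw [hp2d]
        exact lt_of_le_of_lt (degree_add_le _ _)
          (max_lt htd (lt_of_le_of_lt hsdd hn1n))⟩).2
  -- s is the symmetric quotient
  have hsym : (f * g * h * d) /ₘ (p₁ * p₁) = s := by
    refine (div_modByMonic_unique (f := f * g * h * d) s (t * p₁ + r * h * d) (h₁.mul h₁)
      ⟨by rw [hfg]; linear_combination (-p₁) * hu, ?_⟩).1
    have hdeg2 : (p₁ * p₁).degree = ((n + n : ℕ) : WithBot ℕ) := by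
      rw [degree_mul, hp1d]; push_cast; ring
    rw [hdeg2]
    refine lt_of_le_of_lt (degree_add_le _ _) (max_lt ?_ ?_)
    · refine lt_of_le_of_lt (degree_mul_le _ _) ?_
      rw [hp1d]
      calc t.degree + (n : WithBot ℕ) < (n : WithBot ℕ) + (n : WithBot ℕ) := by
            exact WithBot.add_lt_add_right (by exact_mod_cast WithBot.coe_ne_bot) htd
        _ = ((n + n : ℕ) : WithBot ℕ) := by push_cast; ring
    · have hr' : r.degree ≤ ((n - 1 : ℕ) : WithBot ℕ) := by
        refine my_degree_le_of_lt ?_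
        have e : ((n - 1 + 1 : ℕ) : WithBot ℕ) = ((n : ℕ) : WithBot ℕ) := by
          exact Nat.cast_inj.mpr (by omega)
        rw [e]; exact hrd
      refine lt_of_le_of_lt (degree_mul_le _ _) ?_
      refine lt_of_le_of_lt (add_le_add (degree_mul_le _ _) hdiff) ?_
      refine lt_of_le_of_lt (add_le_add (add_le_add hr' hh) (le_refl (1 : WithBot ℕ))) ?_
      have e2 : ((n - 1 : ℕ) : WithBot ℕ) + ((n - 1 : ℕ) : WithBot ℕ) + 1
          = ((n - 1 + (n - 1) + 1 : ℕ) : WithBot ℕ) := by push_cast; ring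
      rw [e2]
      exact_mod_cast by omega
  -- put everything together
  rw [hmod2.1, hsym, add_mul, add_modByMonic, my_mod_mul_mod h₁ (f * g) h]
  have hrh : r * h %ₘ p₂ = (f * g * h) %ₘ p₂ - u %ₘ p₂ := by
    have e : r * h = (f * g) %ₘ p₂ * h - u := by rw [hmod2.1, hu_def]; ring
    rw [e, sub_modByMonic, my_mod_mul_mod h₂]
  rw [hrh, hmodu, ← hu_def, ← ht_def]
  ring

end Aux

/-- Compatibility of the brackets `[ , ]_{p₁}` and `[ , ]_{p₂}`: every linear combination
`a·[ , ]_{p₁} + b·[ , ]_{p₂}` satisfies the Jacobi identity on elements of degree `< n`. -/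
theorem jacobi_for_linear_combination_of_brackets
    (K : Type*) [Field K] [CharZero K]
    (Q : Type*) [LieRing Q] [LieAlgebra K Q]
    (n : ℕ) (hn : 2 ≤ n)
    (p₁ p₂ : Polynomial K) (h₁ : p₁.Monic) (h₂ : p₂.Monic)
    (hd₁ : p₁.natDegree = n) (hd₂ : p₂.natDegree = n)
    (hdiff : (p₁ - p₂).degree ≤ 1)
    (a b : K)
    (β : (Polynomial K ⊗[K] Q) →ₗ[K] (Polynomial K ⊗[K] Q) →ₗ[K] (Polynomial K ⊗[K] Q))
    (hβ : ∀ (f g : Polynomial K) (x y : Q),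
      β (f ⊗ₜ x) (g ⊗ₜ y) =
        a • (((f * g) %ₘ p₁) ⊗ₜ ⁅x, y⁆) + b • (((f * g) %ₘ p₂) ⊗ₜ ⁅x, y⁆)) :
    ∀ (x y z : Q) (f g h : Polynomial K),
      f.degree < (n : WithBot ℕ) → g.degree < (n : WithBot ℕ) → h.degree < (n : WithBot ℕ) →
      β (β (f ⊗ₜ x) (g ⊗ₜ y)) (h ⊗ₜ z) +
      β (β (g ⊗ₜ y) (h ⊗ₜ z)) (f ⊗ₜ x) +
      β (β (h ⊗ₜ z) (f ⊗ₜ x)) (g ⊗ₜ y) = 0 := by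
  intro x y z f g h hf hg hh
  have hcast : ((n - 1 + 1 : ℕ) : WithBot ℕ) = ((n : ℕ) : WithBot ℕ) :=
    Nat.cast_inj.mpr (by omega)
  have conv : ∀ {u : Polynomial K}, u.degree < (n : WithBot ℕ) →
      u.degree ≤ ((n - 1 : ℕ) : WithBot ℕ) := fun hu =>
    my_degree_le_of_lt (by rw [hcast]; exact hu)
  have hf' := conv hf
  have hg' := conv hg
  have hh' := conv hh
  -- per-term normal form
  have term : ∀ (f g h : Polynomial K),
      f.degree ≤ ((n - 1 : ℕ) : WithBot ℕ) → g.degree ≤ ((n - 1 : ℕ) : WithBot ℕ) →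
      h.degree ≤ ((n - 1 : ℕ) : WithBot ℕ) → ∀ x y z : Q,
      β (β (f ⊗ₜ x) (g ⊗ₜ y)) (h ⊗ₜ z) =
        (a * a) • (((f * g * h) %ₘ p₁) ⊗ₜ[K] ⁅⁅x, y⁆, z⁆) +
        (b * b) • (((f * g * h) %ₘ p₂) ⊗ₜ[K] ⁅⁅x, y⁆, z⁆) +
        (a * b) • ((((f * g * h) %ₘ p₁ + (f * g * h) %ₘ p₂
          - (f * g * h * (p₁ - p₂)) /ₘ (p₁ * p₁) * (p₁ - p₂))) ⊗ₜ[K] ⁅⁅x, y⁆, z⁆) := by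
    intro f g h hf hg hh x y z
    rw [hβ f g x y, map_add, LinearMap.add_apply, map_smul, map_smul,
      LinearMap.smul_apply, LinearMap.smul_apply, hβ, hβ,
      my_mod_mul_mod h₁ (f * g) h, my_mod_mul_mod h₂ (f * g) h,
      ← my_key hn h₁ h₂ hd₁ hd₂ hdiff hf hg hh]
    rw [add_tmul]
    module
  have hJ : ⁅⁅x, y⁆, z⁆ + ⁅⁅y, z⁆, x⁆ + ⁅⁅z, x⁆, y⁆ = (0 : Q) := by
    have h0 := lie_jacobi z x y
    have e1 : ⁅⁅x, y⁆, z⁆ = -⁅z, ⁅x, y⁆⁆ := (lie_skew ⁅x, y⁆ z).symm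
    have e2 : ⁅⁅y, z⁆, x⁆ = -⁅x, ⁅y, z⁆⁆ := (lie_skew ⁅y, z⁆ x).symm
    have e3 : ⁅⁅z, x⁆, y⁆ = -⁅y, ⁅z, x⁆⁆ := (lie_skew ⁅z, x⁆ y).symm
    rw [e1, e2, e3, ← neg_add, ← neg_add, h0, neg_zero]
  have grouped : β (β (f ⊗ₜ x) (g ⊗ₜ y)) (h ⊗ₜ z) +
      β (β (g ⊗ₜ y) (h ⊗ₜ z)) (f ⊗ₜ x) +
      β (β (h ⊗ₜ z) (f ⊗ₜ x)) (g ⊗ₜ y) =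
      (a * a) • (((f * g * h) %ₘ p₁) ⊗ₜ[K] (⁅⁅x, y⁆, z⁆ + ⁅⁅y, z⁆, x⁆ + ⁅⁅z, x⁆, y⁆)) +
      (b * b) • (((f * g * h) %ₘ p₂) ⊗ₜ[K] (⁅⁅x, y⁆, z⁆ + ⁅⁅y, z⁆, x⁆ + ⁅⁅z, x⁆, y⁆)) +
      (a * b) • (((f * g * h) %ₘ p₁ + (f * g * h) %ₘ p₂
          - (f * g * h * (p₁ - p₂)) /ₘ (p₁ * p₁) * (p₁ - p₂))
        ⊗ₜ[K] (⁅⁅x, y⁆, z⁆ + ⁅⁅y, z⁆, x⁆ + ⁅⁅z, x⁆, y⁆)) := by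
    rw [term f g h hf' hg' hh' x y z, term g h f hg' hh' hf' y z x,
      term h f g hh' hf' hg' z x y,
      show g * h * f = f * g * h from by ring, show h * f * g = f * g * h from by ring]
    simp only [tmul_add, smul_add]
    module
  rw [grouped, hJ]
  simp
end

section
/- Let K be a field, let p ∈ K[t] be monic of degree n ≥ 2, and let l ∈ K[t] with deg l ≤ 1 (so that p + l is again monic of degree n). Then for every h ∈ K[t] with deg h ≤ 2n − 2 one has (h %ₘ p) − (h %ₘ (p + l)) = l · (h /ₘ p). -/
open Polynomial

/-- If `p` is monic of degree `n ≥ 2`, `deg l ≤ 1`, and `deg h ≤ 2n - 2`, then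
`(h %ₘ p) - (h %ₘ (p + l)) = l · (h /ₘ p)`. -/
theorem modByMonic_sub_modByMonic_add_linear
    (K : Type*) [Field K] (n : ℕ) (hn : 2 ≤ n)
    (p : Polynomial K) (hp : p.Monic) (hdeg : p.natDegree = n)
    (l : Polynomial K) (hl : l.degree ≤ 1)
    (h : Polynomial K) (hh : h.degree ≤ (2 * n - 2 : ℕ)) :
    (h %ₘ p) - (h %ₘ (p + l)) = l * (h /ₘ p) := by
  have hpdeg : p.degree = (n : WithBot ℕ) := by
    rw [degree_eq_natDegree hp.ne_zero, hdeg]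
  have hlp : l.degree < p.degree := by
    rw [hpdeg]
    exact lt_of_le_of_lt hl (by exact_mod_cast (by omega : 1 < n))
  have hpl : (p + l).Monic := hp.add_of_left hlp
  have hpldeg : (p + l).degree = (n : WithBot ℕ) := by
    rw [degree_add_eq_left_of_degree_lt hlp, hpdeg]
  -- degree of the quotient
  have hqnat : (h /ₘ p).natDegree ≤ n - 2 := by
    rw [natDegree_divByMonic h hp, hdeg]
    have := natDegree_le_iff_degree_le.mpr hh
    omega
  have hqdeg : (h /ₘ p).degree ≤ ((n - 2 : ℕ) : WithBot ℕ) :=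
    degree_le_of_natDegree_le hqnat
  have hlq : (l * (h /ₘ p)).degree < (n : WithBot ℕ) := by
    calc (l * (h /ₘ p)).degree ≤ l.degree + (h /ₘ p).degree := degree_mul_le _ _
      _ ≤ (1 : WithBot ℕ) + ((n - 2 : ℕ) : WithBot ℕ) := add_le_add hl hqdeg
      _ = ((1 + (n - 2) : ℕ) : WithBot ℕ) := by push_cast; ring
      _ < (n : WithBot ℕ) := by exact_mod_cast (by omega : 1 + (n - 2) < n)
  have hrdeg : (h %ₘ p - l * (h /ₘ p)).degree < (p + l).degree := by
    rw [hpldeg]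
    refine lt_of_le_of_lt (degree_sub_le _ _) (max_lt ?_ hlq)
    rw [← hpdeg]; exact degree_modByMonic_lt h hp
  have key : h %ₘ (p + l) = h %ₘ p - l * (h /ₘ p) := by
    refine (div_modByMonic_unique (h /ₘ p) _ hpl ⟨?_, hrdeg⟩).2
    have := modByMonic_add_div h p
    ring_nf
    ring_nf at this
    linear_combination this
  rw [key]; ring
end

section
/- Let K be a field of characteristic 0, let 𝔮 be a finite-dimensional Lie algebra over K equipped with a nondegenerate symmetric invariant bilinear form B (i.e. B([x,y],z) = B(x,[y,z]) for all x,y,z) and a basis (x_1, …, x_m) orthonormal with respect to B. Let n ≥ 1, let 𝔥 = 𝔮^{⊕ n} be the product Lie algebra, let ι : 𝔥 → U(𝔥) be the canonical embedding into the universal enveloping algebra, and for x ∈ 𝔮 and 1 ≤ k ≤ n write x^{(k)} = ι(single_k x), where single_k x ∈ 𝔥 has x in the k-th coordinate and 0 elsewhere. Let z_1, …, z_n ∈ K be pairwise distinct and define the Gaudin Hamiltonians ℋ_k = ∑_{j ≠ k} (z_k − z_j)^{-1} · ∑_{i=1}^{m} x_i^{(k)} x_i^{(j)} ∈ U(𝔥)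 for 1 ≤ k ≤ n. Then ∑_{k=1}^{n} ℋ_k = 0 and ℋ_k ℋ_s = ℋ_s ℋ_k for all k, s. -/
open Finset

/-- A finite direct product of Lie algebras carries the componentwise Lie bracket. -/
instance Pi.instLieRing {ι : Type*} {L : ι → Type*} [∀ i, LieRing (L i)] :
    LieRing (∀ i, L i) :=
  { Pi.addCommGroup with
    bracket := fun x y i => ⁅x i, y i⁆
    add_lie := fun x y z => funext fun i => add_lie (x i) (y i) (z i)
    lie_add := fun x y z => funext fun i => lie_add (x i) (y i) (z i)
    lie_self := fun x => funext fun i => lie_self (x i)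
    leibniz_lie := fun x y z => funext fun i => leibniz_lie (x i) (y i) (z i) }

instance Pi.instLieAlgebra {K : Type*} {ι : Type*} {L : ι → Type*} [CommRing K]
    [∀ i, LieRing (L i)] [∀ i, LieAlgebra K (L i)] : LieAlgebra K (∀ i, L i) :=
  { Pi.module ι L K with
    lie_smul := fun c x y => funext fun i => lie_smul c (x i) (y i) }

set_option linter.unusedVariables false
set_option linter.unusedSectionVars false
set_option maxHeartbeats 1000000

attribute [local instance 100] LieRing.ofAssociativeRing

section GaudinAux

lemma rlie_sum {A : Type*} [Ring A] {α : Type*} (x : A) (s : Finset α) (f : α → A) :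
    ⁅x, ∑ i ∈ s, f i⁆ = ∑ i ∈ s, ⁅x, f i⁆ := by
  simp only [Ring.lie_def, Finset.mul_sum, Finset.sum_mul, ← Finset.sum_sub_distrib]

lemma rsum_lie {A : Type*} [Ring A] {α : Type*} (x : A) (s : Finset α) (f : α → A) :
    ⁅∑ i ∈ s, f i, x⁆ = ∑ i ∈ s, ⁅f i, x⁆ := by
  simp only [Ring.lie_def, Finset.mul_sum, Finset.sum_mul, ← Finset.sum_sub_distrib]

lemma rlie_mul {A : Type*} [Ring A] (x y z : A) :
    ⁅x, y * z⁆ = ⁅x, y⁆ * z + y * ⁅x, z⁆ := by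
  simp only [Ring.lie_def]; noncomm_ring

lemma rmul_lie {A : Type*} [Ring A] (x y z : A) :
    ⁅y * z, x⁆ = ⁅y, x⁆ * z + y * ⁅z, x⁆ := by
  simp only [Ring.lie_def]; noncomm_ring

lemma rlie_smul {R A : Type*} [CommRing R] [Ring A] [Algebra R A] (c : R) (x y : A) :
    ⁅x, c • y⁆ = c • ⁅x, y⁆ := by
  simp only [Ring.lie_def, mul_smul_comm, smul_mul_assoc, smul_sub]

lemma rsmul_lie {R A : Type*} [CommRing R] [Ring A] [Algebra R A] (c : R) (x y : A) :
    ⁅c • x, y⁆ = c • ⁅x, y⁆ := by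
  simp only [Ring.lie_def, mul_smul_comm, smul_mul_assoc, smul_sub]

variable {K : Type*} [Field K] [CharZero K] {Q : Type*} [LieRing Q] [LieAlgebra K Q]

lemma piSingle_lie_ne {n : ℕ} {k j : Fin n} (h : k ≠ j) (x y : Q) :
    ⁅(Pi.single k x : Fin n → Q), (Pi.single j y : Fin n → Q)⁆ = 0 := by
  funext i
  show ⁅(Pi.single k x : Fin n → Q) i, (Pi.single j y : Fin n → Q) i⁆ = (0 : Fin n → Q) i
  rw [Pi.zero_apply]
  rcases eq_or_ne i k with rfl | hik
  · rw [Pi.single_eq_of_ne h, lie_zero]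
  · rw [Pi.single_eq_of_ne hik, zero_lie]

lemma piSingle_lie_same {n : ℕ} (k : Fin n) (x y : Q) :
    ⁅(Pi.single k x : Fin n → Q), (Pi.single k y : Fin n → Q)⁆
      = (Pi.single k ⁅x, y⁆ : Fin n → Q) := by
  funext i
  show ⁅(Pi.single k x : Fin n → Q) i, (Pi.single k y : Fin n → Q) i⁆
    = (Pi.single k ⁅x, y⁆ : Fin n → Q) i
  rcases eq_or_ne i k with rfl | hik
  · rw [Pi.single_eq_same, Pi.single_eq_same, Pi.single_eq_same]
  · rw [Pi.single_eq_of_ne hik, Pi.single_eq_of_ne hik, zero_lie, Pi.single_eq_of_ne hik]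

variable (K) in
/-- `x^{(k)}` : the image of `x` placed at site `k` inside `U(𝔮^{⊕n})`. -/
noncomputable def gE {n : ℕ} (k : Fin n) (x : Q) : UniversalEnvelopingAlgebra K (Fin n → Q) :=
  UniversalEnvelopingAlgebra.ι K (Pi.single k x : Fin n → Q)

lemma gE_comm {n : ℕ} {k j : Fin n} (h : k ≠ j) (x y : Q) :
    Commute (gE K k x) (gE K j y) := by
  have h0 : ⁅gE K k x, gE K j y⁆ = 0 := by
    rw [gE, gE, ← LieHom.map_lie, piSingle_lie_ne h, map_zero]
  rwa [Ring.lie_def, sub_eq_zero] at h0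

lemma gE_lie_same {n : ℕ} (k : Fin n) (x y : Q) :
    ⁅gE K k x, gE K k y⁆ = gE K k ⁅x, y⁆ := by
  rw [gE, gE, gE, ← LieHom.map_lie, piSingle_lie_same]

lemma gE_smul {n : ℕ} (k : Fin n) (c : K) (x : Q) : gE K k (c • x) = c • gE K k x := by
  rw [gE, gE, Pi.single_smul, map_smul]

lemma gE_eq_linear {n : ℕ} (k : Fin n) (x : Q) :
    gE K k x = ((UniversalEnvelopingAlgebra.ι K).toLinearMap.comp
      (LinearMap.single K (fun _ : Fin n => Q) k)) x := rfl

lemma gE_add {n : ℕ} (k : Fin n) (x y : Q) : gE K k (x + y) = gE K k x + gE K k y := by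
  simp only [gE_eq_linear, map_add]

lemma gE_sum {n : ℕ} (k : Fin n) {α : Type*} (s : Finset α) (f : α → Q) :
    gE K k (∑ a ∈ s, f a) = ∑ a ∈ s, gE K k (f a) := by
  simp only [gE_eq_linear, map_sum]


variable (K) in
/-- `Ω_{kj} = ∑_i x_i^{(k)} x_i^{(j)}`. -/
noncomputable def gOm {n m : ℕ} (bx : Module.Basis (Fin m) K Q) (k j : Fin n) :
    UniversalEnvelopingAlgebra K (Fin n → Q) :=
  ∑ i, gE K k (bx i) * gE K j (bx i)

section WithForm
variable (B : Q →ₗ[K] Q →ₗ[K] K) {m : ℕ} (bx : Module.Basis (Fin m) K Q)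

lemma B_repr (horth : ∀ i j, B (bx i) (bx j) = if i = j then 1 else 0) (q : Q) :
    q = ∑ l, B q (bx l) • bx l := by
  have hrep : ∀ l, B q (bx l) = bx.repr q l := by
    intro l
    conv_lhs => rw [← bx.sum_repr q]
    rw [map_sum, LinearMap.sum_apply]
    simp only [map_smul, LinearMap.smul_apply, horth, smul_eq_mul, mul_ite, mul_one, mul_zero]
    rw [Finset.sum_ite_eq' Finset.univ l (fun i => bx.repr q i)]
    simp
  simp only [hrep]
  exact (bx.sum_repr q).symm

lemma B_lie_swap13 (hsymm : ∀ x y : Q, B x y = B y x)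
    (hinv : ∀ x y w : Q, B ⁅x, y⁆ w = B x ⁅y, w⁆) (x y w : Q) :
    B ⁅x, y⁆ w = - B ⁅w, y⁆ x := by
  rw [hinv, hsymm, ← lie_skew w y, map_neg, LinearMap.neg_apply, hinv, hsymm, neg_neg]

lemma B_lie_diag (hsymm : ∀ x y : Q, B x y = B y x)
    (hinv : ∀ x y w : Q, B ⁅x, y⁆ w = B x ⁅y, w⁆) (x y : Q) :
    B ⁅x, y⁆ x = 0 := by
  have h := B_lie_swap13 B hsymm hinv x y x
  have h2 : (2 : K) * B ⁅x, y⁆ x = 0 := by rw [two_mul]; nth_rewrite 2 [h]; ring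
  exact (mul_eq_zero.mp h2).resolve_left two_ne_zero

/-- Bracket of two same-site generators expanded in the basis. -/
lemma gE_lie_basis (hinv : ∀ x y w : Q, B ⁅x, y⁆ w = B x ⁅y, w⁆)
    (horth : ∀ i j, B (bx i) (bx j) = if i = j then 1 else 0)
    {n : ℕ} (k : Fin n) (a b : Fin m) :
    ⁅gE K k (bx a), gE K k (bx b)⁆ = ∑ l, B ⁅bx a, bx b⁆ (bx l) • gE K k (bx l) := by
  rw [gE_lie_same]
  conv_lhs => rw [B_repr B bx horth ⁅bx a, bx b⁆]
  rw [gE_sum]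
  exact Finset.sum_congr rfl fun l _ => gE_smul k _ _

/-- Casimir invariance: `⁅Ω_{kj}, x_b^{(k)} + x_b^{(j)}⁆ = 0`. -/
lemma casimir_inv (hsymm : ∀ x y : Q, B x y = B y x)
    (hinv : ∀ x y w : Q, B ⁅x, y⁆ w = B x ⁅y, w⁆)
    (horth : ∀ i j, B (bx i) (bx j) = if i = j then 1 else 0)
    {n : ℕ} {k j : Fin n} (hkj : k ≠ j) (b : Fin m) :
    ⁅gOm K bx k j, gE K k (bx b) + gE K j (bx b)⁆ = 0 := by
  rw [gOm, rsum_lie]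
  have hterm : ∀ a : Fin m, ⁅gE K k (bx a) * gE K j (bx a), gE K k (bx b) + gE K j (bx b)⁆
      = ∑ l, B ⁅bx a, bx b⁆ (bx l) • (gE K k (bx l) * gE K j (bx a) + gE K k (bx a) * gE K j (bx l)) := by
    intro a
    have e1 : ⁅gE K k (bx a), gE K k (bx b) + gE K j (bx b)⁆
        = ∑ l, B ⁅bx a, bx b⁆ (bx l) • gE K k (bx l) := by
      rw [lie_add, (gE_comm hkj (bx a) (bx b)).lie_eq, add_zero, gE_lie_basis B bx hinv horth]
    have e2 : ⁅gE K j (bx a), gE K k (bx b) + gE K j (bx b)⁆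
        = ∑ l, B ⁅bx a, bx b⁆ (bx l) • gE K j (bx l) := by
      rw [lie_add, (gE_comm hkj.symm (bx a) (bx b)).lie_eq, zero_add, gE_lie_basis B bx hinv horth]
    rw [rmul_lie, e1, e2, Finset.sum_mul, Finset.mul_sum, ← Finset.sum_add_distrib]
    exact Finset.sum_congr rfl fun l _ => by rw [smul_mul_assoc, mul_smul_comm, smul_add]
  simp only [hterm]
  rw [← Finset.sum_product']
  refine Finset.sum_ninvolution Prod.swap ?_ ?_ (fun _ => Finset.mem_univ _)
    (fun p => Prod.swap_swap p)
  · intro p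
    obtain ⟨a, l⟩ := p
    show B ⁅bx a, bx b⁆ (bx l) • (gE K k (bx l) * gE K j (bx a) + gE K k (bx a) * gE K j (bx l))
        + B ⁅bx l, bx b⁆ (bx a) • (gE K k (bx a) * gE K j (bx l) + gE K k (bx l) * gE K j (bx a)) = 0
    rw [B_lie_swap13 B hsymm hinv, neg_smul,
      add_comm (gE K k (bx a) * gE K j (bx l)) (gE K k (bx l) * gE K j (bx a))]
    abel
  · intro p hfp
    obtain ⟨a, l⟩ := p
    intro hpp
    apply hfp
    have hal : l = a := congrArg Prod.fst hpp
    subst hal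
    show B ⁅bx l, bx b⁆ (bx l) • _ = 0
    rw [B_lie_diag B hsymm hinv, zero_smul]

lemma gOm_symm {n : ℕ} {k j : Fin n} (h : k ≠ j) : gOm K bx k j = gOm K bx j k := by
  unfold gOm
  exact Finset.sum_congr rfl fun i _ => (gE_comm h (bx i) (bx i)).eq

lemma gOm_lie_gE_zero {n : ℕ} {k j l : Fin n} (hlk : l ≠ k) (hlj : l ≠ j) (x : Q) :
    ⁅gOm K bx k j, gE K l x⁆ = 0 := by
  rw [gOm, rsum_lie]
  refine Finset.sum_eq_zero fun i _ => ?_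
  exact ((gE_comm hlk.symm (bx i) x).mul_left (gE_comm hlj.symm (bx i) x)).lie_eq

lemma gOm_key (hsymm : ∀ x y : Q, B x y = B y x)
    (hinv : ∀ x y w : Q, B ⁅x, y⁆ w = B x ⁅y, w⁆)
    (horth : ∀ i j, B (bx i) (bx j) = if i = j then 1 else 0)
    {n : ℕ} {k j l : Fin n} (hkj : k ≠ j) (hkl : k ≠ l) (hjl : j ≠ l) :
    ⁅gOm K bx k j, gOm K bx k l + gOm K bx j l⁆ = 0 := by
  have hsum : gOm K bx k l + gOm K bx j l
      = ∑ a, (gE K k (bx a) + gE K j (bx a)) * gE K l (bx a) := by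
    rw [gOm, gOm, ← Finset.sum_add_distrib]
    exact Finset.sum_congr rfl fun a _ => (add_mul _ _ _).symm
  rw [hsum, rlie_sum]
  refine Finset.sum_eq_zero fun a _ => ?_
  rw [rlie_mul, casimir_inv B bx hsymm hinv horth hkj a, zero_mul,
    gOm_lie_gE_zero bx hkl.symm hjl.symm, mul_zero, add_zero]

lemma gOm_lie_disjoint {n : ℕ} {k j s t : Fin n}
    (h1 : s ≠ k) (h2 : s ≠ j) (h3 : t ≠ k) (h4 : t ≠ j) :
    ⁅gOm K bx k j, gOm K bx s t⁆ = 0 := by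
  nth_rewrite 2 [gOm]
  rw [rlie_sum]
  refine Finset.sum_eq_zero fun i _ => ?_
  rw [rlie_mul, gOm_lie_gE_zero bx h1 h2, gOm_lie_gE_zero bx h3 h4, zero_mul, mul_zero,
    add_zero]

end WithForm
end GaudinAux

/-- The Gaudin Hamiltonians `ℋ_k = ∑_{j ≠ k} (z_k - z_j)⁻¹ ∑_i x_i^{(k)} x_i^{(j)}` in the
universal enveloping algebra of `𝔥 = 𝔮^{⊕n}` sum to zero and pairwise commute. -/
theorem gaudin_hamiltonians_commute
    (K : Type*) [Field K] [CharZero K]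
    (Q : Type*) [LieRing Q] [LieAlgebra K Q] [FiniteDimensional K Q]
    (B : Q →ₗ[K] Q →ₗ[K] K)
    (hsymm : ∀ x y : Q, B x y = B y x)
    (hnd : LinearMap.BilinForm.Nondegenerate B)
    (hinv : ∀ x y w : Q, B ⁅x, y⁆ w = B x ⁅y, w⁆)
    (m : ℕ) (bx : Module.Basis (Fin m) K Q)
    (horth : ∀ i j, B (bx i) (bx j) = if i = j then 1 else 0)
    (n : ℕ) (hn : 1 ≤ n) (z : Fin n → K) (hz : Function.Injective z)
    (H : Fin n → UniversalEnvelopingAlgebra K (Fin n → Q))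
    (hH : ∀ k, H k = ∑ j ∈ Finset.univ \ {k}, (z k - z j)⁻¹ •
      ∑ i, (UniversalEnvelopingAlgebra.ι K (Pi.single k (bx i)) *
            UniversalEnvelopingAlgebra.ι K (Pi.single j (bx i)))) :
    (∑ k, H k = 0) ∧ (∀ k s, H k * H s = H s * H k) := by
  have hH' : ∀ k, H k = ∑ j ∈ Finset.univ \ {k}, (z k - z j)⁻¹ • gOm K bx k j := hH
  have hzsub : ∀ {a b : Fin n}, a ≠ b → z a - z b ≠ 0 :=
    fun h => sub_ne_zero.mpr fun he => h (hz he)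
  constructor
  · -- the Hamiltonians sum to zero
    have hf : ∀ k : Fin n, ∀ j ∈ univ \ {k},
        (z j - z k)⁻¹ • gOm K bx j k = -((z k - z j)⁻¹ • gOm K bx k j) := by
      intro k j hj
      have hjk : j ≠ k := by simpa using (Finset.mem_sdiff.mp hj).2
      rw [gOm_symm bx hjk, ← neg_sub (z k) (z j), inv_neg, neg_smul]
    have hS : (∑ k, H k) = - ∑ k, H k := by
      calc ∑ k, H k
          = ∑ k : Fin n, ∑ j ∈ univ \ {k}, (z k - z j)⁻¹ • gOm K bx k j :=
            Finset.sum_congr rfl fun k _ => hH' k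
        _ = ∑ j : Fin n, ∑ k ∈ univ \ {j}, (z k - z j)⁻¹ • gOm K bx k j := by
            refine Finset.sum_comm' ?_
            intro x y
            simp only [Finset.mem_univ, true_and, and_true, Finset.mem_sdiff,
              Finset.mem_singleton]
            exact not_congr eq_comm
        _ = ∑ k : Fin n, ∑ j ∈ univ \ {k}, (z j - z k)⁻¹ • gOm K bx j k := rfl
        _ = ∑ k : Fin n, ∑ j ∈ univ \ {k}, -((z k - z j)⁻¹ • gOm K bx k j) :=
            Finset.sum_congr rfl fun k _ => Finset.sum_congr rfl fun j hj => hf k j hj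
        _ = - ∑ k : Fin n, ∑ j ∈ univ \ {k}, (z k - z j)⁻¹ • gOm K bx k j := by
            simp [← Finset.sum_neg_distrib]
        _ = - ∑ k, H k := by
            exact congrArg Neg.neg (Finset.sum_congr rfl fun k _ => (hH' k).symm)
    have h2 : (2 : K) • (∑ k, H k) = 0 := by
      rw [two_smul]
      nth_rewrite 2 [hS]
      exact add_neg_cancel _
    exact (smul_eq_zero.mp h2).resolve_left two_ne_zero
  · -- the Hamiltonians commute
    intro k s
    rcases eq_or_ne k s with rfl | hks
    · rfl
    have hlie : ⁅H k, H s⁆ = 0 := by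
      -- notation
      have hexp : ⁅H k, H s⁆ = ∑ j ∈ univ \ {k}, ∑ t ∈ univ \ {s},
          ((z k - z j)⁻¹ * (z s - z t)⁻¹) • ⁅gOm K bx k j, gOm K bx s t⁆ := by
        rw [hH' k, hH' s, rsum_lie]
        refine Finset.sum_congr rfl fun j hj => ?_
        rw [rsmul_lie, rlie_sum, Finset.smul_sum]
        refine Finset.sum_congr rfl fun t ht => ?_
        rw [rlie_smul, smul_smul]
      have hsmem : s ∈ univ \ {k} := by simp [hks.symm]
      have hkmem : k ∈ univ \ {s} := by simp [hks]
      have hD' : ((univ \ {s}) \ {k} : Finset (Fin n)) = (univ \ {k}) \ {s} := by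
        ext a; simp only [Finset.mem_sdiff, Finset.mem_singleton, Finset.mem_univ, true_and]
        tauto
      have hDmem : ∀ a, a ∈ (univ \ {k}) \ {s} ↔ (a ≠ k ∧ a ≠ s) := by
        intro a
        simp [Finset.mem_sdiff]
      -- the inner sum for j = s
      have hinner_s : ∑ t ∈ univ \ {s},
          ((z k - z s)⁻¹ * (z s - z t)⁻¹) • ⁅gOm K bx k s, gOm K bx s t⁆
          = ∑ t ∈ (univ \ {k}) \ {s},
            (-((z k - z s)⁻¹ * (z s - z t)⁻¹)) • ⁅gOm K bx k s, gOm K bx k t⁆ := by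
        rw [Finset.sum_eq_sum_sdiff_singleton_add hkmem, hD']
        have h0 : ⁅gOm K bx k s, gOm K bx s k⁆ = 0 := by
          rw [gOm_symm bx hks.symm]
          exact lie_self _
        rw [h0, smul_zero, add_zero]
        refine Finset.sum_congr rfl fun t ht => ?_
        obtain ⟨htk, hts⟩ := (hDmem t).mp ht
        have hkey := gOm_key B bx hsymm hinv horth hks htk.symm hts.symm
        rw [lie_add] at hkey
        have : ⁅gOm K bx k s, gOm K bx s t⁆ = -⁅gOm K bx k s, gOm K bx k t⁆ :=
          eq_neg_of_add_eq_zero_right hkey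
        rw [this, smul_neg, ← neg_smul]
      -- the inner sum for j ∈ D
      have hinner_j : ∀ j ∈ (univ \ {k}) \ {s}, ∑ t ∈ univ \ {s},
          ((z k - z j)⁻¹ * (z s - z t)⁻¹) • ⁅gOm K bx k j, gOm K bx s t⁆
          = (((z k - z j)⁻¹ * (z s - z j)⁻¹) +
              (-((z k - z j)⁻¹ * (z s - z k)⁻¹))) • ⁅gOm K bx k s, gOm K bx k j⁆ := by
        intro j hj
        obtain ⟨hjk, hjs⟩ := (hDmem j).mp hj
        rw [Finset.sum_eq_sum_sdiff_singleton_add hkmem, hD']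
        have h1 : ⁅gOm K bx k j, gOm K bx s k⁆ = -⁅gOm K bx k s, gOm K bx k j⁆ := by
          have e : gOm K bx s k = gOm K bx k s := gOm_symm bx hks.symm
          rw [e, ← lie_skew]
        have h2 : ∑ t ∈ (univ \ {k}) \ {s},
            ((z k - z j)⁻¹ * (z s - z t)⁻¹) • ⁅gOm K bx k j, gOm K bx s t⁆
            = ((z k - z j)⁻¹ * (z s - z j)⁻¹) • ⁅gOm K bx k s, gOm K bx k j⁆ := by
          rw [Finset.sum_eq_single_of_mem j hj]
          · congr 1
            have hkey := gOm_key B bx hsymm hinv horth hjk.symm hks hjs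
            rw [lie_add] at hkey
            have hleft : ⁅gOm K bx k j, gOm K bx k s⁆ = -⁅gOm K bx k s, gOm K bx k j⁆ :=
              (lie_skew _ _).symm
            have e2 : gOm K bx j s = gOm K bx s j := gOm_symm bx hjs
            rw [hleft, e2] at hkey
            -- hkey : -X + ⁅gOm k j, gOm s j⁆ = 0
            have := eq_neg_of_add_eq_zero_right hkey
            rw [this, neg_neg]
          · intro t ht htj
            obtain ⟨htk, hts⟩ := (hDmem t).mp ht
            rw [gOm_lie_disjoint bx hks.symm hjs.symm htk htj, smul_zero]
        rw [h2, h1, smul_neg, ← neg_smul, ← add_smul]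
      -- put everything together
      rw [hexp, Finset.sum_eq_sum_sdiff_singleton_add hsmem, hinner_s]
      rw [Finset.sum_congr rfl hinner_j, ← Finset.sum_add_distrib]
      refine Finset.sum_eq_zero fun j hj => ?_
      obtain ⟨hjk, hjs⟩ := (hDmem j).mp hj
      rw [← add_smul]
      have hcoef : (((z k - z j)⁻¹ * (z s - z j)⁻¹) + (-((z k - z j)⁻¹ * (z s - z k)⁻¹)))
          + (-((z k - z s)⁻¹ * (z s - z j)⁻¹)) = 0 := by
        have h1 := hzsub hjk.symm  -- z k - z j ≠ 0
        have h2 := hzsub hjs.symm  -- z s - z j ≠ 0 (wrong direction?)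
        have h3 := hzsub hks       -- z k - z s ≠ 0
        have h4 := hzsub hks.symm  -- z s - z k ≠ 0
        field_simp
        ring
      rw [hcoef, zero_smul]
    rw [Ring.lie_def, sub_eq_zero] at hlie
    exact hlie
end

section
/- Let K be a field of characteristic 0, let 𝔮 be a finite-dimensional Lie algebra over K with a nondegenerate symmetric invariant bilinear form B and a B-orthonormal basis (x_1, …, x_m), let n ≥ 3, and let p = t^n − (c_{n−1} t^{n−1} + … + c_1 t + c_0) ∈ K[t]. Let L = (K[t]/(p)) ⊗_K 𝔮 and regard L ⊗_K L as a Lie module over L via the diagonal action ⁅w, u⊗v⁆ = ⁅w,u⁆⊗v + u⊗⁅w,v⁆. For 0 ≤ a,b ≤ n−1 set T[a,b] = ∑_{i=1}^{m} (t̄^a ⊗ x_i) ⊗ (t̄^b ⊗ x_i) ∈ L ⊗ L and 𝐡[a,b] = T[a,b] + T[b,a]; for 3 ≤ k ≤ n set X_k = ∑_{b=2}^{k−1} T[k+1−b, b]. Then the element X = c_0·𝐡[1,0] + c_1·T[1,1] − (∑_{k=3}^{n−1} c_k·X_k) + X_n satisfies ⁅w, X⁆ = 0 for every w ∈ L. (This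 says that a certain explicit quadratic element lies in the Poisson centre of S(𝔮[t]/(p)).) -/
open TensorProduct Polynomial

/-- For a commutative `K`-algebra `A` and a Lie algebra `L` over `K`, the Lie algebra
`A ⊗[K] L` (with bracket `[f⊗x, g⊗y] = (fg) ⊗ [x,y]`) is also a Lie algebra over `K`. -/
noncomputable instance tensorLieAlgebraOfBase (K A L : Type*) [CommRing K] [CommRing A]
    [Algebra K A] [LieRing L] [LieAlgebra K L] : LieAlgebra K (A ⊗[K] L) :=
  { (inferInstance : Module K (A ⊗[K] L)) with
    lie_smul := fun c x y => by
      rw [← algebraMap_smul A c y, lie_smul, algebraMap_smul] }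

lemma aux_tel {K R : Type*} [CommRing K] [CommRing R] [Algebra K R] (u v : R)
    (k : ℕ) (hk : 3 ≤ k) :
    (u - v) * ∑ b ∈ Finset.Icc 2 (k - 1), u ^ (k + 1 - b) * v ^ b
      = u ^ k * v ^ 2 - u ^ 2 * v ^ k := by
  have h1 : ∑ b ∈ Finset.Icc 2 (k - 1), (u - v) * (u ^ (k + 1 - b) * v ^ b)
      = ∑ i ∈ Finset.range (k - 2),
        ((fun i => u ^ (k - i) * v ^ (i + 2)) i - (fun i => u ^ (k - i) * v ^ (i + 2)) (i+1)) := by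
    rw [← Finset.Ico_add_one_right_eq_Icc, Finset.sum_Ico_eq_sum_range]
    have hcard : k - 1 + 1 - 2 = k - 2 := by omega
    rw [hcard]
    refine Finset.sum_congr rfl fun i hi => ?_
    simp only [Finset.mem_range] at hi
    have e1 : k + 1 - (2 + i) = k - 1 - i := by omega
    have e2 : k - 1 - i = k - (i+1) := by omega
    have e3 : k - i = (k - (i+1)) + 1 := by omega
    simp only []
    rw [e1, e2, sub_mul, e3, pow_succ]
    ring
  rw [Finset.mul_sum, h1, Finset.sum_range_sub' (fun i => u ^ (k - i) * v ^ (i + 2))]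
  have h2 : k - (k-2) = 2 := by omega
  have h3 : k - 2 + 2 = k := by omega
  rw [Nat.sub_zero, h2, h3]

lemma aux_key {K R : Type*} [CommRing K] [CommRing R] [Algebra K R] (u v : R)
    (n : ℕ) (hn : 3 ≤ n) (c : ℕ → K)
    (hu : u ^ n = ∑ k ∈ Finset.range n, c k • u ^ k)
    (hv : v ^ n = ∑ k ∈ Finset.range n, c k • v ^ k) :
    (u - v) * (c 0 • (u ^ 1 * v ^ 0 + u ^ 0 * v ^ 1) + c 1 • (u ^ 1 * v ^ 1)
      - (∑ k ∈ Finset.Icc 3 (n - 1), c k • ∑ b ∈ Finset.Icc 2 (k - 1), u ^ (k + 1 - b) * v ^ b)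
      + ∑ b ∈ Finset.Icc 2 (n - 1), u ^ (n + 1 - b) * v ^ b) = 0 := by
  have htel := aux_tel (K := K) u v n hn
  rw [mul_add, mul_sub, mul_add, htel, Finset.mul_sum]
  have hsum : ∑ k ∈ Finset.Icc 3 (n-1), (u - v) * (c k • ∑ b ∈ Finset.Icc 2 (k - 1), u ^ (k + 1 - b) * v ^ b)
      = ∑ k ∈ Finset.Icc 3 (n-1), c k • (u ^ k * v ^ 2 - u ^ 2 * v ^ k) := by
    refine Finset.sum_congr rfl fun k hk => ?_
    simp only [Finset.mem_Icc] at hk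
    rw [mul_smul_comm, aux_tel (K := K) u v k hk.1]
  rw [hsum]
  -- substitute u^n and v^n
  have hexp : u ^ n * v ^ 2 - u ^ 2 * v ^ n
      = ∑ k ∈ Finset.range n, c k • (u ^ k * v ^ 2 - u ^ 2 * v ^ k) := by
    rw [hu, hv, Finset.sum_mul, Finset.mul_sum, ← Finset.sum_sub_distrib]
    refine Finset.sum_congr rfl fun k _ => ?_
    rw [smul_mul_assoc, mul_smul_comm, ← smul_sub]
  rw [hexp]
  have hsplit : ∑ k ∈ Finset.range n, c k • (u ^ k * v ^ 2 - u ^ 2 * v ^ k)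
      = (∑ k ∈ Finset.range 3, c k • (u ^ k * v ^ 2 - u ^ 2 * v ^ k))
        + ∑ k ∈ Finset.Icc 3 (n-1), c k • (u ^ k * v ^ 2 - u ^ 2 * v ^ k) := by
    have hIco : Finset.Icc 3 (n-1) = Finset.Ico 3 n := by
      rw [← Finset.Ico_add_one_right_eq_Icc]; congr 1; omega
    rw [hIco, Finset.range_eq_Ico,
      ← Finset.sum_Ico_consecutive _ (by omega : (0:ℕ) ≤ 3) (by omega : 3 ≤ n), Finset.range_eq_Ico]
  rw [hsplit]
  simp only [Finset.sum_range_succ, Finset.range_zero, Finset.sum_empty, zero_add]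
  rw [mul_comm (u-v) _, mul_comm (u-v) _]
  rw [smul_mul_assoc, smul_mul_assoc]
  have e0 : (u ^ 1 * v ^ 0 + u ^ 0 * v ^ 1) * (u - v) = -(u ^ 0 * v ^ 2 - u ^ 2 * v ^ 0) := by ring
  have e1 : u ^ 1 * v ^ 1 * (u - v) = -(u ^ 1 * v ^ 2 - u ^ 2 * v ^ 1) := by ring
  have e2 : u ^ 2 * v ^ 2 - u ^ 2 * v ^ 2 = 0 := by ring
  rw [e0, e1, e2, smul_zero, smul_neg, smul_neg]
  abel



lemma aux_lie_finsum {L M ι : Type*} [LieRing L] [AddCommGroup M] [LieRingModule L M]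
    (x : L) (s : Finset ι) (f : ι → M) : ⁅x, ∑ i ∈ s, f i⁆ = ∑ i ∈ s, ⁅x, f i⁆ := by
  classical
  induction s using Finset.cons_induction with
  | empty => simp
  | cons a s ha ih => rw [Finset.sum_cons, lie_add, ih, Finset.sum_cons]

lemma aux_casimir_skew {K Q : Type*} [Field K] [LieRing Q] [LieAlgebra K Q]
    (B : Q →ₗ[K] Q →ₗ[K] K)
    (hinv : ∀ x y w : Q, B ⁅x, y⁆ w = B x ⁅y, w⁆)
    {m : ℕ} (bx : Module.Basis (Fin m) K Q)
    (horth : ∀ i j, B (bx i) (bx j) = if i = j then 1 else 0)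
    (x : Q) :
    ∑ i, (bx i ⊗ₜ[K] ⁅x, bx i⁆ : Q ⊗[K] Q) = - ∑ i, ⁅x, bx i⁆ ⊗ₜ[K] bx i := by
  have hcoef : ∀ (y : Q) (j : Fin m), bx.repr y j = B y (bx j) := by
    intro y j
    conv_rhs => rw [← bx.sum_repr y]
    simp only [map_sum, map_smul, LinearMap.sum_apply, LinearMap.smul_apply, horth,
      smul_eq_mul, mul_ite, mul_one, mul_zero]
    rw [Finset.sum_ite_eq' Finset.univ j]
    simp
  have hrep : ∀ y : Q, y = ∑ j, (B y (bx j)) • bx j := by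
    intro y
    conv_lhs => rw [← bx.sum_repr y]
    exact Finset.sum_congr rfl fun j _ => by rw [hcoef]
  have hskew : ∀ i j, B ⁅x, bx i⁆ (bx j) = - B ⁅x, bx j⁆ (bx i) := by
    intro i j
    rw [hinv, hinv, ← lie_skew (bx j) (bx i), map_neg, neg_neg]
  have h1 : ∑ i, (bx i ⊗ₜ[K] ⁅x, bx i⁆ : Q ⊗[K] Q)
      = ∑ i, ∑ j, (B ⁅x, bx i⁆ (bx j)) • (bx i ⊗ₜ[K] bx j) := by
    refine Finset.sum_congr rfl fun i _ => ?_
    conv_lhs => rw [hrep ⁅x, bx i⁆]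
    rw [tmul_sum]
    exact Finset.sum_congr rfl fun j _ => by rw [tmul_smul]
  have h2 : ∑ i, (⁅x, bx i⁆ ⊗ₜ[K] bx i : Q ⊗[K] Q)
      = ∑ i, ∑ j, (B ⁅x, bx i⁆ (bx j)) • (bx j ⊗ₜ[K] bx i) := by
    refine Finset.sum_congr rfl fun i _ => ?_
    conv_lhs => rw [hrep ⁅x, bx i⁆]
    rw [sum_tmul]
    exact Finset.sum_congr rfl fun j _ => by rw [smul_tmul']
  rw [h1, h2]
  rw [Finset.sum_comm]
  rw [← Finset.sum_neg_distrib]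
  refine Finset.sum_congr rfl fun i _ => ?_
  rw [← Finset.sum_neg_distrib]
  refine Finset.sum_congr rfl fun j _ => ?_
  rw [hskew i j, neg_smul, neg_neg]

lemma aux_dvd {K A : Type*} [CommRing K] [CommRing A] [Algebra K A] (τ : A)
    (q : Polynomial K) :
    ∃ g : A ⊗[K] A, (aeval τ q) ⊗ₜ[K] 1 - 1 ⊗ₜ[K] (aeval τ q)
      = g * (τ ⊗ₜ[K] 1 - 1 ⊗ₜ[K] τ) := by
  set D : A ⊗[K] A := τ ⊗ₜ[K] 1 - 1 ⊗ₜ[K] τ with hD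
  set I : Ideal (A ⊗[K] A) := Ideal.span {D} with hI
  set π := Ideal.Quotient.mk I with hπ
  have hψ : (π.comp ((Algebra.TensorProduct.includeLeftRingHom : A →+* A ⊗[K] A).comp
        (aeval τ : Polynomial K →ₐ[K] A).toRingHom))
      = (π.comp (((Algebra.TensorProduct.includeRight : A →ₐ[K] A ⊗[K] A)
          : A →+* A ⊗[K] A).comp (aeval τ : Polynomial K →ₐ[K] A).toRingHom)) := by
    apply Polynomial.ringHom_ext
    · intro a
      simp only [RingHom.comp_apply, AlgHom.toRingHom_eq_coe, RingHom.coe_coe, aeval_C]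
      congr 1
      rw [Algebra.TensorProduct.includeLeftRingHom_apply,
        Algebra.TensorProduct.includeRight_apply]
      rw [Algebra.algebraMap_eq_smul_one, smul_tmul]
    · simp only [RingHom.comp_apply, AlgHom.toRingHom_eq_coe, RingHom.coe_coe, aeval_X,
        Algebra.TensorProduct.includeLeftRingHom_apply,
        Algebra.TensorProduct.includeRight_apply]
      rw [Ideal.Quotient.mk_eq_mk_iff_sub_mem]
      exact Ideal.mem_span_singleton_self D
  have happ : π ((aeval τ q) ⊗ₜ[K] 1) = π (1 ⊗ₜ[K] (aeval τ q)) := by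
    have := congrArg (fun ψ => ψ q) hψ
    simpa using this
  have hmem : (aeval τ q) ⊗ₜ[K] (1:A) - (1:A) ⊗ₜ[K] (aeval τ q) ∈ I := by
    rw [Ideal.Quotient.mk_eq_mk_iff_sub_mem] at happ
    exact happ
  rw [hI, Ideal.mem_span_singleton] at hmem
  obtain ⟨g, hg⟩ := hmem
  exact ⟨g, by rw [hg, mul_comm]⟩

set_option maxHeartbeats 1000000 in
set_option synthInstance.maxHeartbeats 400000 in
lemma aux_main {K A Q : Type*} [Field K] [CommRing A] [Algebra K A]
    [LieRing Q] [LieAlgebra K Q]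
    (B : Q →ₗ[K] Q →ₗ[K] K)
    (hinv : ∀ x y w : Q, B ⁅x, y⁆ w = B x ⁅y, w⁆)
    {m : ℕ} (bx : Module.Basis (Fin m) K Q)
    (horth : ∀ i j, B (bx i) (bx j) = if i = j then 1 else 0)
    (n : ℕ) (hn : 3 ≤ n) (c : ℕ → K) (τ : A)
    (hτn : τ ^ n = ∑ k ∈ Finset.range n, c k • τ ^ k)
    (hsurj : ∀ f : A, ∃ q : Polynomial K, aeval τ q = f)
    (T : ℕ → ℕ → (A ⊗[K] Q) ⊗[K] (A ⊗[K] Q))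
    (hT : ∀ a b, T a b = ∑ i, ((τ ^ a) ⊗ₜ[K] bx i) ⊗ₜ[K] ((τ ^ b) ⊗ₜ[K] bx i)) :
    ∀ w : A ⊗[K] Q, ⁅w, c 0 • (T 1 0 + T 0 1) + c 1 • T 1 1
        - (∑ k ∈ Finset.Icc 3 (n - 1), c k • ∑ b ∈ Finset.Icc 2 (k - 1), T (k + 1 - b) b)
        + ∑ b ∈ Finset.Icc 2 (n - 1), T (n + 1 - b) b⁆ = 0 := by
  classical
  set z := c 0 • (T 1 0 + T 0 1) + c 1 • T 1 1
      - (∑ k ∈ Finset.Icc 3 (n - 1), c k • ∑ b ∈ Finset.Icc 2 (k - 1), T (k + 1 - b) b)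
      + ∑ b ∈ Finset.Icc 2 (n - 1), T (n + 1 - b) b with hz
  set u : A ⊗[K] A := τ ⊗ₜ[K] 1 with hudef
  set v : A ⊗[K] A := (1 : A) ⊗ₜ[K] τ with hvdef
  have huvpow : ∀ a b : ℕ, u ^ a * v ^ b = (τ ^ a) ⊗ₜ[K] (τ ^ b) := by
    intro a b
    rw [hudef, hvdef, Algebra.TensorProduct.tmul_pow, Algebra.TensorProduct.tmul_pow,
      one_pow, one_pow, Algebra.TensorProduct.tmul_mul_tmul, one_mul, mul_one]
  have hu : u ^ n = ∑ k ∈ Finset.range n, c k • u ^ k := by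
    have h1 : u ^ n = (τ ^ n) ⊗ₜ[K] (1 : A) := by
      rw [hudef, Algebra.TensorProduct.tmul_pow, one_pow]
    rw [h1, hτn, sum_tmul]
    refine Finset.sum_congr rfl fun k _ => ?_
    rw [← smul_tmul', hudef, Algebra.TensorProduct.tmul_pow, one_pow]
  have hv : v ^ n = ∑ k ∈ Finset.range n, c k • v ^ k := by
    have h1 : v ^ n = (1 : A) ⊗ₜ[K] (τ ^ n) := by
      rw [hvdef, Algebra.TensorProduct.tmul_pow, one_pow]
    rw [h1, hτn, tmul_sum]
    refine Finset.sum_congr rfl fun k _ => ?_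
    rw [tmul_smul, hvdef, Algebra.TensorProduct.tmul_pow, one_pow]
  -- reduce to pure tensors
  suffices hmain : ∀ (f : A) (x : Q), ⁅f ⊗ₜ[K] x, z⁆ = 0 by
    intro w
    induction w using TensorProduct.induction_on with
    | zero => exact zero_lie (L := A ⊗[K] Q) (M := (A ⊗[K] Q) ⊗[K] (A ⊗[K] Q)) z
    | tmul f x => exact hmain f x
    | add a b ha hb =>
      exact (LieRingModule.add_lie a b z).trans (by rw [ha, hb, add_zero])
  intro f x
  have eE : ∀ y : (A ⊗[K] Q) ⊗[K] (A ⊗[K] Q),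
      ⁅f ⊗ₜ[K] x, y⁆ = (LieModule.toEnd K (A ⊗[K] Q) ((A ⊗[K] Q) ⊗[K] (A ⊗[K] Q))
        (f ⊗ₜ[K] x)) y := fun _ => rfl
  set E := LieModule.toEnd K (A ⊗[K] Q) ((A ⊗[K] Q) ⊗[K] (A ⊗[K] Q)) (f ⊗ₜ[K] x) with hEdef
  set G : (A ⊗[K] A) →ₗ[K] (A ⊗[K] Q) ⊗[K] (A ⊗[K] Q) :=
    ∑ i, TensorProduct.map
      ((TensorProduct.mk K A Q).flip ⁅x, bx i⁆)
      ((TensorProduct.mk K A Q).flip (bx i)) with hGdef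
  have hGapp : ∀ (g h : A),
      G (g ⊗ₜ[K] h) = ∑ i, (g ⊗ₜ[K] ⁅x, bx i⁆) ⊗ₜ[K] (h ⊗ₜ[K] bx i) := by
    intro g h
    rw [hGdef, LinearMap.sum_apply]
    refine Finset.sum_congr rfl fun i _ => ?_
    rw [TensorProduct.map_tmul]
    rfl
  have hG2 : ∀ (g h : A),
      ∑ i, ((g ⊗ₜ[K] bx i) ⊗ₜ[K] (h ⊗ₜ[K] ⁅x, bx i⁆)) = - G (g ⊗ₜ[K] h) := by
    intro g h
    have hc := aux_casimir_skew B hinv bx horth x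
    have happ := congrArg
      (TensorProduct.map ((TensorProduct.mk K A Q) g) ((TensorProduct.mk K A Q) h)) hc
    simp only [map_sum, map_neg, TensorProduct.map_tmul, TensorProduct.mk_apply] at happ
    rw [happ, hGapp]
  have hbr : ∀ a b : ℕ, E (T a b)
      = G ((f ⊗ₜ[K] 1 - 1 ⊗ₜ[K] f) * (u ^ a * v ^ b)) := by
    intro a b
    have hstep : ∀ i : Fin m,
        E (((τ ^ a) ⊗ₜ[K] bx i) ⊗ₜ[K] ((τ ^ b) ⊗ₜ[K] bx i))
        = ((f * τ ^ a) ⊗ₜ[K] ⁅x, bx i⁆) ⊗ₜ[K] ((τ ^ b) ⊗ₜ[K] bx i)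
          + ((τ ^ a) ⊗ₜ[K] bx i) ⊗ₜ[K] ((f * τ ^ b) ⊗ₜ[K] ⁅x, bx i⁆) := by
      intro i
      rw [← eE, LieModule.lie_tmul_right]
      rfl
    rw [hT a b, map_sum, Finset.sum_congr rfl fun i _ => hstep i, Finset.sum_add_distrib,
      hG2 (τ ^ a) (f * τ ^ b)]
    have hrhs : (f ⊗ₜ[K] (1 : A) - (1 : A) ⊗ₜ[K] f) * (u ^ a * v ^ b)
        = (f * τ ^ a) ⊗ₜ[K] (τ ^ b) - (τ ^ a) ⊗ₜ[K] (f * τ ^ b) := by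
      rw [huvpow, sub_mul, Algebra.TensorProduct.tmul_mul_tmul,
        Algebra.TensorProduct.tmul_mul_tmul, one_mul, one_mul]
    rw [hrhs, map_sub, hGapp, hGapp]
    abel
  set XA := c 0 • (u ^ 1 * v ^ 0 + u ^ 0 * v ^ 1) + c 1 • (u ^ 1 * v ^ 1)
      - (∑ k ∈ Finset.Icc 3 (n - 1), c k • ∑ b ∈ Finset.Icc 2 (k - 1), u ^ (k + 1 - b) * v ^ b)
      + ∑ b ∈ Finset.Icc 2 (n - 1), u ^ (n + 1 - b) * v ^ b with hXAdef
  have hkey : (u - v) * XA = 0 := aux_key u v n hn c hu hv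
  obtain ⟨q, hq⟩ := hsurj f
  obtain ⟨g, hg⟩ := aux_dvd τ q
  rw [hq] at hg
  have hd0 : (f ⊗ₜ[K] (1 : A) - (1 : A) ⊗ₜ[K] f) * XA = 0 := by
    rw [hg]
    have h2 : g * ((u - v) * XA) = 0 := by rw [hkey, mul_zero]
    exact (mul_assoc g (u - v) XA).trans h2
  set Gd : (A ⊗[K] A) →ₗ[K] (A ⊗[K] Q) ⊗[K] (A ⊗[K] Q) :=
    G ∘ₗ LinearMap.mulLeft K (f ⊗ₜ[K] (1 : A) - (1 : A) ⊗ₜ[K] f) with hGddef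
  have hbr' : ∀ a b : ℕ, E (T a b) = Gd (u ^ a * v ^ b) := fun a b => hbr a b
  have hfin : E z = Gd XA := by
    rw [hz, hXAdef]
    simp only [map_add, map_sub, map_smul, map_sum]
    simp only [hbr']
  have hGd0 : Gd XA = 0 := by
    have h5 : Gd XA = G ((f ⊗ₜ[K] (1 : A) - (1 : A) ⊗ₜ[K] f) * XA) := rfl
    rw [h5, hd0, map_zero]
  rw [eE z, hfin, hGd0]

set_option synthInstance.maxHeartbeats 1000000 in
set_option maxHeartbeats 1000000 in
/-- The explicit quadratic element
`X = c₀·𝐡[1,0] + c₁·T[1,1] - ∑_{k=3}^{n-1} cₖ·Xₖ + Xₙ` (with `𝐡[a,b] = T[a,b] + T[b,a]` and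
`Xₖ = ∑_{b=2}^{k-1} T[k+1-b, b]`) in `L ⊗ L`, `L = 𝔮[t]/(p)`, is annihilated by the diagonal
action of `L`; i.e. it lies in the Poisson centre of `S(𝔮[t]/(p))`. -/
theorem quadratic_element_in_poisson_centre
    (K : Type*) [Field K] [CharZero K]
    (Q : Type*) [LieRing Q] [LieAlgebra K Q] [FiniteDimensional K Q]
    (B : Q →ₗ[K] Q →ₗ[K] K)
    (hsymm : ∀ x y : Q, B x y = B y x)
    (hnd : LinearMap.BilinForm.Nondegenerate B)
    (hinv : ∀ x y w : Q, B ⁅x, y⁆ w = B x ⁅y, w⁆)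
    (m : ℕ) (bx : Module.Basis (Fin m) K Q)
    (horth : ∀ i j, B (bx i) (bx j) = if i = j then 1 else 0)
    (n : ℕ) (hn : 3 ≤ n) (c : ℕ → K)
    (p : Polynomial K)
    (hp : p = X ^ n - ∑ k ∈ Finset.range n, C (c k) * X ^ k)
    (T : ℕ → ℕ → ((Polynomial K ⧸ Ideal.span {p}) ⊗[K] Q) ⊗[K]
      ((Polynomial K ⧸ Ideal.span {p}) ⊗[K] Q))
    (hT : ∀ a b, T a b = ∑ i,
      ((Ideal.Quotient.mk (Ideal.span {p}) (X ^ a)) ⊗ₜ[K] bx i) ⊗ₜ[K]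
      ((Ideal.Quotient.mk (Ideal.span {p}) (X ^ b)) ⊗ₜ[K] bx i)) :
    ∀ w : (Polynomial K ⧸ Ideal.span {p}) ⊗[K] Q,
      ⁅w, c 0 • (T 1 0 + T 0 1) + c 1 • T 1 1
          - (∑ k ∈ Finset.Icc 3 (n - 1), c k • ∑ b ∈ Finset.Icc 2 (k - 1), T (k + 1 - b) b)
          + ∑ b ∈ Finset.Icc 2 (n - 1), T (n + 1 - b) b⁆ = 0 := by
  have hτn : (Ideal.Quotient.mk (Ideal.span {p}) X) ^ n
      = ∑ k ∈ Finset.range n, c k • (Ideal.Quotient.mk (Ideal.span {p}) X) ^ k := by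
    have hp0 : Ideal.Quotient.mk (Ideal.span {p})
        (X ^ n - ∑ k ∈ Finset.range n, C (c k) * X ^ k) = 0 := by
      rw [← hp, Ideal.Quotient.eq_zero_iff_mem]
      exact Ideal.mem_span_singleton_self p
    rw [map_sub, sub_eq_zero] at hp0
    rw [← map_pow, hp0, map_sum]
    refine Finset.sum_congr rfl fun k _ => ?_
    rw [map_mul, map_pow]
    have : Ideal.Quotient.mk (Ideal.span {p}) (C (c k)) = algebraMap K _ (c k) := rfl
    rw [this, ← Algebra.smul_def]
  have hsurj : ∀ f : Polynomial K ⧸ Ideal.span {p},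
      ∃ q : Polynomial K, aeval (Ideal.Quotient.mk (Ideal.span {p}) X) q = f := by
    intro f
    obtain ⟨q, rfl⟩ := Ideal.Quotient.mk_surjective f
    refine ⟨q, ?_⟩
    have h2 : aeval ((Ideal.Quotient.mkₐ K (Ideal.span {p})) X) q
        = (Ideal.Quotient.mkₐ K (Ideal.span {p})) (aeval X q) :=
      (Polynomial.aeval_algHom_apply _ X q)
    simpa [Ideal.Quotient.mkₐ_eq_mk, Polynomial.aeval_X_left] using h2
  have hT' : ∀ a b : ℕ, T a b = ∑ i,
      (((Ideal.Quotient.mk (Ideal.span {p}) X) ^ a) ⊗ₜ[K] bx i) ⊗ₜ[K]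
      (((Ideal.Quotient.mk (Ideal.span {p}) X) ^ b) ⊗ₜ[K] bx i) := by
    intro a b
    rw [hT a b]
    refine Finset.sum_congr rfl fun i _ => ?_
    rw [map_pow, map_pow]
  exact aux_main B hinv bx horth n hn c _ hτn hsurj T hT'
end

section
/- Let k ≥ 1 and d ≥ 1 be integers, and let A be the (k+1)×(k+1) integer matrix with rows and columns indexed by 0, …, k, whose entries are: A_{ij} = 0 if j < i − 1; A_{ij} = C(k+d−i, j−i+1) (binomial coefficient) if i − 1 ≤ j ≤ k − 1; and A_{ik} = C(k+d−i−1, k−i) in the last column. Then det A = 1. -/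
/-- Entry of the binomial matrix, as a function of natural indices. -/
def binEnt (k d i j : ℕ) : ℤ :=
  if j + 1 < i then (0 : ℤ)
  else if j < k then ((k + d - i).choose (j + 1 - i) : ℤ)
  else ((k + d - i - 1).choose (k - i) : ℤ)

/-- The binomial matrix. -/
def binMat (k d : ℕ) : Matrix (Fin (k + 1)) (Fin (k + 1)) ℤ :=
  Matrix.of fun i j : Fin (k + 1) => binEnt k d i j

/-- Pascal-rule row step. -/
lemma binEnt_step (k d i j : ℕ) (hd : 1 ≤ d) (hi : i < k) (hj : j ≤ k) :
    binEnt k d i j - binEnt k d (i + 1) j = binEnt k (d - 1) i j := by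
  unfold binEnt
  rcases lt_trichotomy (j + 1) i with h | h | h
  · rw [if_pos h, if_pos (by omega : j + 1 < i + 1), if_pos h]
    ring
  · have h1 : ¬ j + 1 < i := by omega
    rw [if_neg h1, if_pos (by omega : j + 1 < i + 1), if_neg h1,
      if_pos (by omega : j < k), if_pos (by omega : j < k)]
    have h0 : j + 1 - i = 0 := by omega
    simp [h0]
  · have h1 : ¬ j + 1 < i := by omega
    have h2 : ¬ j + 1 < i + 1 := by omega
    rw [if_neg h1, if_neg h2, if_neg h1]
    by_cases hjk : j < k
    · rw [if_pos hjk, if_pos hjk, if_pos hjk]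
      have hn : k + d - i = (k + d - i - 1) + 1 := by omega
      have hm : j + 1 - i = (j - i) + 1 := by omega
      have hm2 : j + 1 - (i + 1) = j - i := by omega
      have hn2 : k + d - (i + 1) = k + d - i - 1 := by omega
      have hn3 : k + (d - 1) - i = k + d - i - 1 := by omega
      rw [hn, hm, hm2, hn2, hn3, Nat.choose_succ_succ]
      push_cast
      ring
    · rw [if_neg hjk, if_neg hjk, if_neg hjk]
      have hn : k + d - i - 1 = (k + d - i - 2) + 1 := by omega
      have hm : k - i = (k - i - 1) + 1 := by omega
      have hn2 : k + d - (i + 1) - 1 = k + d - i - 2 := by omega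
      have hm2 : k - (i + 1) = k - i - 1 := by omega
      have hn3 : k + (d - 1) - i - 1 = k + d - i - 2 := by omega
      rw [hn, hm, hn2, hm2, hn3, Nat.choose_succ_succ]
      push_cast
      ring

/-- Row `k` is unchanged by decreasing `d`. -/
lemma binEnt_last_row (k d d' j : ℕ) (hj : j ≤ k) :
    binEnt k d k j = binEnt k d' k j := by
  unfold binEnt
  rcases lt_trichotomy (j + 1) k with h | h | h
  · rw [if_pos h, if_pos h]
  · have h1 : ¬ j + 1 < k := by omega
    rw [if_neg h1, if_neg h1, if_pos (by omega : j < k), if_pos (by omega : j < k)]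
    have h0 : j + 1 - k = 0 := by omega
    simp [h0]
  · have hjk : j = k := by omega
    have h1 : ¬ j + 1 < k := by omega
    rw [if_neg h1, if_neg h1, if_neg (by omega : ¬ j < k), if_neg (by omega : ¬ j < k)]
    have h0 : k - k = 0 := by omega
    simp [h0]

/-- The elementary row-operation matrix. -/
def rowOp (n : ℕ) : Matrix (Fin (n + 1)) (Fin (n + 1)) ℤ :=
  Matrix.of fun i j => (if i = j then (1 : ℤ) else 0) + (if (i : ℕ) + 1 = (j : ℕ) then (-1 : ℤ) else 0)

lemma rowOp_det (n : ℕ) : (rowOp n).det = 1 := by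
  rw [Matrix.det_of_upperTriangular]
  · apply Finset.prod_eq_one
    intro i _
    simp [rowOp]
  · intro i j hij
    simp only [id] at hij
    have h1 : ¬ (i = j) := by exact fun h => absurd h (by exact fun h => (lt_irrefl _ (h ▸ hij)))
    have h2 : ¬ ((i : ℕ) + 1 = (j : ℕ)) := by omega
    simp [rowOp, h1, h2]

lemma rowOp_mul (k d : ℕ) (hd : 1 ≤ d) :
    rowOp k * binMat k d = binMat k (d - 1) := by
  ext i j
  rw [Matrix.mul_apply]
  simp only [rowOp, binMat, Matrix.of_apply]
  have hsplit : ∀ t : Fin (k + 1),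
      ((if i = t then (1 : ℤ) else 0) + (if (i : ℕ) + 1 = (t : ℕ) then (-1 : ℤ) else 0)) * binEnt k d t j
      = (if i = t then binEnt k d t j else 0) + (if (i : ℕ) + 1 = (t : ℕ) then -binEnt k d t j else 0) := by
    intro t
    split_ifs <;> ring
  rw [Finset.sum_congr rfl fun t _ => hsplit t, Finset.sum_add_distrib,
    Finset.sum_ite_eq Finset.univ i (fun t => binEnt k d t j)]
  simp only [Finset.mem_univ, if_true]
  by_cases hik : (i : ℕ) < k
  · have hlt : (i : ℕ) + 1 < k + 1 := by omega
    set i' : Fin (k + 1) := ⟨(i : ℕ) + 1, hlt⟩ with hi'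
    have hcond : ∀ t : Fin (k + 1), ((i : ℕ) + 1 = (t : ℕ)) = (i' = t) := by
      intro t
      simp [Fin.ext_iff, hi']
    simp only [hcond]
    rw [Finset.sum_ite_eq Finset.univ i' (fun t => -binEnt k d t j)]
    simp only [Finset.mem_univ, if_true]
    have := binEnt_step k d i j hd hik (by omega : (j : ℕ) ≤ k)
    rw [← sub_eq_add_neg]; exact this
  · have hik' : (i : ℕ) = k := by omega
    have hcond : ∀ t : Fin (k + 1), ¬ ((i : ℕ) + 1 = (t : ℕ)) := by
      intro t; omega
    simp only [hcond, if_false, Finset.sum_const_zero, add_zero]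
    rw [hik']
    exact binEnt_last_row k d (d - 1) j (by omega)

lemma binMat_det_d_step (k d : ℕ) (hd : 1 ≤ d) :
    (binMat k d).det = (binMat k (d - 1)).det := by
  conv_rhs => rw [← rowOp_mul k d hd]
  rw [Matrix.det_mul, rowOp_det, one_mul]

/-- Cofactor step: the last column of `binMat (k+1) 0` is `e_last`. -/
lemma binMat_det_k_step (k : ℕ) :
    (binMat (k + 1) 0).det = (binMat k 1).det := by
  rw [Matrix.det_succ_column (binMat (k + 1) 0) (Fin.last (k + 1))]
  rw [Finset.sum_eq_single (Fin.last (k + 1))]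
  · have hentry : binMat (k + 1) 0 (Fin.last (k + 1)) (Fin.last (k + 1)) = 1 := by
      simp only [binMat, binEnt, Matrix.of_apply, Fin.val_last]
      rw [if_neg (by omega), if_neg (by omega)]
      norm_num
    rw [hentry, mul_one]
    have hsign : ((-1 : ℤ)) ^ ((Fin.last (k + 1) : ℕ) + (Fin.last (k + 1) : ℕ)) = 1 := by
      rw [Fin.val_last, ← two_mul, pow_mul]
      norm_num
    rw [hsign, one_mul]
    congr 1
    ext i j
    simp only [Matrix.submatrix_apply, Fin.succAbove_last, binMat, binEnt, Matrix.of_apply,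
      Fin.coe_castSucc]
    have hi : (i : ℕ) ≤ k := by omega
    have hj : (j : ℕ) ≤ k := by omega
    by_cases h1 : (j : ℕ) + 1 < (i : ℕ)
    · rw [if_pos h1, if_pos h1]
    · rw [if_neg h1, if_neg h1]
      by_cases h2 : (j : ℕ) < k
      · rw [if_pos (by omega : (j : ℕ) < k + 1), if_pos h2]
      · have hjk : (j : ℕ) = k := by omega
        rw [if_pos (by omega : (j : ℕ) < k + 1), if_neg h2]
        have e1 : k + 1 + 0 - (i : ℕ) = (k + 1 - i) := by omega
        have e2 : (j : ℕ) + 1 - (i : ℕ) = k + 1 - i := by omega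
        have e3 : k + 1 - (i : ℕ) - 1 = k - i := by omega
        rw [e1, e2, e3, Nat.choose_self, Nat.choose_self]
  · intro i _ hne
    have hi : (i : ℕ) < k + 1 := by
      have := i.isLt
      rcases Nat.lt_succ_iff_lt_or_eq.mp this with h | h
      · exact h
      · exact absurd (Fin.ext h) hne
    have hentry : binMat (k + 1) 0 i (Fin.last (k + 1)) = 0 := by
      simp only [binMat, binEnt, Matrix.of_apply, Fin.val_last]
      rw [if_neg (by omega), if_neg (by omega)]
      have : k + 1 + 0 - (i : ℕ) - 1 < k + 1 - (i : ℕ) := by omega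
      rw [Nat.choose_eq_zero_of_lt this]
      norm_num
    rw [hentry, mul_zero, zero_mul]
  · intro h
    exact absurd (Finset.mem_univ _) h

lemma binMat_det (k : ℕ) : ∀ d, (binMat k d).det = 1 := by
  induction k with
  | zero =>
    intro d
    rw [show (binMat 0 d).det = binMat 0 d 0 0 from Matrix.det_fin_one _]
    simp [binMat, binEnt]
  | succ k ih =>
    intro d
    induction d with
    | zero => rw [binMat_det_k_step k]; exact ih 1
    | succ d ihd =>
      rw [binMat_det_d_step (k + 1) (d + 1) (by omega)]
      simpa using ihd

/-- The determinant of the `(k+1) × (k+1)` integer matrix with entries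
`A_{ij} = 0` for `j < i - 1`, `A_{ij} = C(k+d-i, j-i+1)` for `i-1 ≤ j ≤ k-1`, and
`A_{ik} = C(k+d-i-1, k-i)` in the last column, equals `1`. -/
theorem det_binomial_matrix_eq_one (k d : ℕ) (hk : 1 ≤ k) (hd : 1 ≤ d) :
    Matrix.det (Matrix.of fun i j : Fin (k + 1) =>
      if (j : ℕ) + 1 < (i : ℕ) then (0 : ℤ)
      else if (j : ℕ) < k then ((k + d - i).choose (j + 1 - i) : ℤ)
      else ((k + d - i - 1).choose (k - i) : ℤ)) = 1 := by
  exact binMat_det k d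
end

section
/- Let K be a field of characteristic 0, 𝔮 a Lie algebra over K, and n ≥ 2. Let W = K[t]_{<n} ⊗_K 𝔮 and let ℓ_∞ be the bilinear map on W determined by ℓ_∞(f⊗x, g⊗y) = (((fg) %ₘ (t^n − 1)) − ((fg) %ₘ t^n)) ⊗ [x,y]. Let Φ : W → (K[t]/(t^{n+1})) ⊗_K 𝔮 be the linear map with Φ(t^a ⊗ x) = t̄^{ n−a} ⊗ x for 0 ≤ a ≤ n−1 and x ∈ 𝔮. Then Φ is injective, its image is the span of the subspaces t̄^c ⊗ 𝔮 for 1 ≤ c ≤ n (i.e. the ideal t̄·(K[t]/(t^{n+1})) ⊗ 𝔮 of the Takiff algebra 𝔮⟨n+1⟩), and Φ(ℓ_∞(u,v)) = ⁅Φ(u), Φ(v)⁆ for all u, v ∈ W. (Thus (W, ℓ_∞) is isomorphic to the nilpotent Lie algebra t·𝔮[t]/(t^{n+1}).) -/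
open TensorProduct Polynomial

set_option synthInstance.maxHeartbeats 1000000 in
set_option maxHeartbeats 1000000 in
/-- `(W, ℓ_∞)`, where `ℓ_∞ = [ , ]_{t^n-1} - [ , ]_{t^n}` on `W = K[t]_{<n} ⊗ 𝔮`, is
isomorphic to the nilpotent Lie algebra `t·𝔮[t]/(t^{n+1})` via `Φ(t^a ⊗ x) = t̄^{n-a} ⊗ x`:
`Φ` is injective, its image is the span of the `t̄^c ⊗ 𝔮` for `1 ≤ c ≤ n`, and `Φ`
transforms `ℓ_∞` into the Lie bracket of the Takiff algebra `𝔮⟨n+1⟩`. -/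
theorem ell_infinity_iso_nilradical_takiff
    (K : Type*) [Field K] [CharZero K]
    (Q : Type*) [LieRing Q] [LieAlgebra K Q]
    (n : ℕ) (hn : 2 ≤ n)
    (ℓ : ((Polynomial.degreeLT K n : Submodule K (Polynomial K)) ⊗[K] Q) →ₗ[K]
      ((Polynomial.degreeLT K n : Submodule K (Polynomial K)) ⊗[K] Q) →ₗ[K]
      ((Polynomial.degreeLT K n : Submodule K (Polynomial K)) ⊗[K] Q))
    (hℓ : ∀ (f g : Polynomial.degreeLT K n) (x y : Q),
      (LinearMap.rTensor Q (Polynomial.degreeLT K n).subtype) (ℓ (f ⊗ₜ x) (g ⊗ₜ y)) =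
        ((((f : Polynomial K) * (g : Polynomial K)) %ₘ (X ^ n - 1) -
          ((f : Polynomial K) * (g : Polynomial K)) %ₘ (X ^ n : Polynomial K)) ⊗ₜ ⁅x, y⁆))
    (e : ℕ → Polynomial.degreeLT K n)
    (he : ∀ a, a < n → ((e a : Polynomial K) = X ^ a))
    (Φ : ((Polynomial.degreeLT K n : Submodule K (Polynomial K)) ⊗[K] Q) →ₗ[K]
      (Polynomial K ⧸ Ideal.span {(X : Polynomial K) ^ (n + 1)}) ⊗[K] Q)
    (hΦ : ∀ (a : ℕ), a < n → ∀ x : Q, Φ (e a ⊗ₜ x) =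
      (Ideal.Quotient.mk (Ideal.span {(X : Polynomial K) ^ (n + 1)}) (X ^ (n - a))) ⊗ₜ x) :
    Function.Injective Φ ∧
    LinearMap.range Φ = (⨆ c ∈ Finset.Icc 1 n,
      LinearMap.range (TensorProduct.mk K (Polynomial K ⧸ Ideal.span {(X : Polynomial K) ^ (n + 1)}) Q
        ((Ideal.Quotient.mk (Ideal.span {(X : Polynomial K) ^ (n + 1)}) X) ^ c))) ∧
    (∀ u v, Φ (ℓ u v) = ⁅Φ u, Φ v⁆) := by
  -- every element of `degreeLT K n` is a combination of the `e a`
  have hpoly : ∀ p : Polynomial K, p ∈ degreeLT K n →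
      p = ∑ i ∈ Finset.range n, p.coeff i • (X : Polynomial K) ^ i := by
    intro p hp
    ext k
    rw [Polynomial.finset_sum_coeff]
    simp only [Polynomial.coeff_smul, Polynomial.coeff_X_pow, smul_eq_mul, mul_ite, mul_one,
      mul_zero]
    rw [Finset.sum_ite_eq (Finset.range n) k fun i => p.coeff i]
    by_cases hk : k < n
    · simp [hk]
    · simp only [Finset.mem_range, hk, if_false]
      exact Polynomial.coeff_eq_zero_of_degree_lt
        (lt_of_lt_of_le (Polynomial.mem_degreeLT.1 hp)
          (by exact_mod_cast Nat.cast_le.2 (le_of_not_gt hk)))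
  have hdecomp : ∀ p : Polynomial.degreeLT K n,
      p = ∑ i ∈ Finset.range n, (p : Polynomial K).coeff i • e i := by
    intro p
    apply Subtype.ext
    rw [show (((∑ i ∈ Finset.range n, (p : Polynomial K).coeff i • e i) :
        Polynomial.degreeLT K n) : Polynomial K)
        = ∑ i ∈ Finset.range n, (p : Polynomial K).coeff i • ((e i : Polynomial K)) by
      push_cast; rfl]
    calc (p : Polynomial K) = ∑ i ∈ Finset.range n, (p : Polynomial K).coeff i • (X : Polynomial K) ^ i :=
          hpoly _ p.2
      _ = ∑ i ∈ Finset.range n, (p : Polynomial K).coeff i • ((e i : Polynomial K)) := by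
          refine Finset.sum_congr rfl fun i hi => ?_
          rw [he i (Finset.mem_range.1 hi)]
  -- spanning set of W
  have hspanW : Submodule.span K
      {w : (Polynomial.degreeLT K n : Submodule K (Polynomial K)) ⊗[K] Q |
        ∃ a, ∃ _ : a < n, ∃ x : Q, w = e a ⊗ₜ x} = ⊤ := by
    rw [eq_top_iff]
    rintro w -
    induction w using TensorProduct.induction_on with
    | zero => exact Submodule.zero_mem _
    | add u v hu hv => exact Submodule.add_mem _ hu hv
    | tmul p x =>
      rw [hdecomp p, TensorProduct.sum_tmul]
      refine Submodule.sum_mem _ fun i hi => ?_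
      rw [← TensorProduct.smul_tmul']
      exact Submodule.smul_mem _ _
        (Submodule.subset_span ⟨i, Finset.mem_range.1 hi, x, rfl⟩)
  -- the linear map φ on the polynomial factor
  let ref : Polynomial K →ₗ[K] Polynomial K :=
    { toFun := fun p => Polynomial.reflect (n - 1) p
      map_add' := fun p q => Polynomial.reflect_add p q (n - 1)
      map_smul' := fun c p => by
        simp only [RingHom.id_apply]
        rw [Polynomial.smul_eq_C_mul, Polynomial.smul_eq_C_mul, Polynomial.reflect_C_mul] }
  let φ : (Polynomial.degreeLT K n : Submodule K (Polynomial K)) →ₗ[K] (Polynomial K ⧸ Ideal.span {(X : Polynomial K) ^ (n + 1)}) :=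
    (Ideal.Quotient.mkₐ K (Ideal.span {(X : Polynomial K) ^ (n + 1)})).toLinearMap ∘ₗ (LinearMap.mulLeft K (X : Polynomial K)) ∘ₗ
      ref ∘ₗ (Polynomial.degreeLT K n).subtype
  have hφ_apply : ∀ a, a < n → φ (e a) = Ideal.Quotient.mk (Ideal.span {(X : Polynomial K) ^ (n + 1)}) (X ^ (n - a)) := by
    intro a ha
    show Ideal.Quotient.mk (Ideal.span {(X : Polynomial K) ^ (n + 1)}) ((X : Polynomial K) * Polynomial.reflect (n - 1) (e a : Polynomial K))
      = Ideal.Quotient.mk (Ideal.span {(X : Polynomial K) ^ (n + 1)}) (X ^ (n - a))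
    rw [he a ha, Polynomial.reflect_monomial, Polynomial.revAt_le (by omega)]
    congr 1
    rw [← pow_succ']
    congr 1
    omega
  have hΦeq : Φ = LinearMap.rTensor Q φ := by
    apply LinearMap.ext_on hspanW
    rintro w ⟨a, ha, x, rfl⟩
    rw [hΦ a ha x, LinearMap.rTensor_tmul, hφ_apply a ha]
  -- φ is injective
  have hφinj : Function.Injective φ := by
    have hker : ∀ p : Polynomial.degreeLT K n, φ p = 0 → p = 0 := by
      intro p hp
      have h1 : (X : Polynomial K) * Polynomial.reflect (n - 1) (p : Polynomial K) ∈ Ideal.span {(X : Polynomial K) ^ (n + 1)} := by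
        rwa [← Ideal.Quotient.eq_zero_iff_mem]
      rw [Ideal.mem_span_singleton] at h1
      have h2 : (X : Polynomial K) ^ n ∣ Polynomial.reflect (n - 1) (p : Polynomial K) := by
        have := h1
        rw [pow_succ', mul_dvd_mul_iff_left (Polynomial.X_ne_zero (R := K))] at this
        exact this
      rw [Polynomial.X_pow_dvd_iff] at h2
      apply Subtype.ext
      show (p : Polynomial K) = 0
      ext k
      rw [Polynomial.coeff_zero]
      by_cases hk : k < n
      · have := h2 (n - 1 - k) (by omega)
        rw [Polynomial.coeff_reflect, Polynomial.revAt_le (by omega)] at this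
        rwa [show n - 1 - (n - 1 - k) = k by omega] at this
      · exact Polynomial.coeff_eq_zero_of_degree_lt
          (lt_of_lt_of_le (Polynomial.mem_degreeLT.1 p.2)
            (by exact_mod_cast Nat.cast_le.2 (le_of_not_gt hk)))
    intro p q hpq
    rw [← sub_eq_zero]
    exact hker _ (by rw [map_sub, hpq, sub_self])
  have hΦinj : Function.Injective Φ := by
    rw [hΦeq]
    exact Module.Flat.rTensor_preserves_injective_linearMap φ hφinj
  have hrinj : Function.Injective
      (LinearMap.rTensor Q (Polynomial.degreeLT K n).subtype) :=
    Module.Flat.rTensor_preserves_injective_linearMap _ (Submodule.injective_subtype _)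
  -- modByMonic computations
  have hmonic1 : ((X : Polynomial K) ^ n - 1).Monic := by
    have := Polynomial.monic_X_pow_sub_C (1 : K) (show n ≠ 0 by omega)
    simpa using this
  have hdeg1 : ((X : Polynomial K) ^ n - 1).degree = n := by
    have := Polynomial.degree_X_pow_sub_C (show 0 < n by omega) (1 : K)
    simpa using this
  have hmod1 : ∀ s : ℕ, s < n →
      ((X : Polynomial K) ^ s %ₘ (X ^ n - 1) - (X : Polynomial K) ^ s %ₘ X ^ n) = 0 := by
    intro s hs
    rw [(Polynomial.modByMonic_eq_self_iff hmonic1).2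
        (by rw [hdeg1, Polynomial.degree_X_pow]; exact_mod_cast hs),
      (Polynomial.modByMonic_eq_self_iff (Polynomial.monic_X_pow n)).2
        (by rw [Polynomial.degree_X_pow, Polynomial.degree_X_pow]; exact_mod_cast hs),
      sub_self]
  have hmod2 : ∀ s : ℕ, n ≤ s → s < 2 * n →
      ((X : Polynomial K) ^ s %ₘ (X ^ n - 1) - (X : Polynomial K) ^ s %ₘ X ^ n)
        = X ^ (s - n) := by
    intro s hs hs2
    have hzero : (X : Polynomial K) ^ s %ₘ X ^ n = 0 :=
      (Polynomial.modByMonic_eq_zero_iff_dvd (Polynomial.monic_X_pow n)).2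
        (pow_dvd_pow X hs)
    have hsplit : (X : Polynomial K) ^ s = X ^ (s - n) + X ^ (s - n) * (X ^ n - 1) := by
      rw [mul_sub, mul_one, ← pow_add, Nat.sub_add_cancel hs]
      ring
    rw [hzero, sub_zero, hsplit, Polynomial.add_modByMonic,
      (Polynomial.modByMonic_eq_zero_iff_dvd hmonic1).2 (dvd_mul_left _ _),
      add_zero,
      (Polynomial.modByMonic_eq_self_iff hmonic1).2
        (by rw [hdeg1, Polynomial.degree_X_pow]; exact_mod_cast (by omega : s - n < n))]
  -- core bracket computation
  have hcore : ∀ a, a < n → ∀ b, b < n → ∀ x y : Q,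
      Φ (ℓ (e a ⊗ₜ x) (e b ⊗ₜ y)) = ⁅Φ (e a ⊗ₜ x), Φ (e b ⊗ₜ y)⁆ := by
    intro a ha b hb x y
    have hprod : ((e a : Polynomial K) * (e b : Polynomial K)) = X ^ (a + b) := by
      rw [he a ha, he b hb, pow_add]
    rw [hΦ a ha, hΦ b hb, LieAlgebra.ExtendScalars.bracket_tmul]
    by_cases hs : a + b < n
    · have hzero : ℓ (e a ⊗ₜ x) (e b ⊗ₜ y) = 0 := by
        apply hrinj
        rw [hℓ, hprod, hmod1 _ hs, map_zero, TensorProduct.zero_tmul]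
      rw [hzero, map_zero]
      have hz : (Ideal.Quotient.mk (Ideal.span {(X : Polynomial K) ^ (n + 1)}) (X ^ (n - a))) * (Ideal.Quotient.mk (Ideal.span {(X : Polynomial K) ^ (n + 1)}) (X ^ (n - b)))
          = 0 := by
        rw [← map_mul, ← pow_add, Ideal.Quotient.eq_zero_iff_mem,
          Ideal.mem_span_singleton]
        exact pow_dvd_pow X (by omega)
      rw [hz, TensorProduct.zero_tmul]
    · push_neg at hs
      have hlt : a + b - n < n := by omega
      have hval : ℓ (e a ⊗ₜ x) (e b ⊗ₜ y) = e (a + b - n) ⊗ₜ ⁅x, y⁆ := by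
        apply hrinj
        rw [hℓ, hprod, hmod2 (a + b) hs (by omega), LinearMap.rTensor_tmul,
          Submodule.subtype_apply, he _ hlt]
      rw [hval, hΦ _ hlt]
      rw [← map_mul, ← pow_add]
      congr 3
      omega
  refine ⟨hΦinj, ?_, ?_⟩
  · -- range
    apply le_antisymm
    · rintro w ⟨u, rfl⟩
      have hu : u ∈ Submodule.span K
          {w : (Polynomial.degreeLT K n : Submodule K (Polynomial K)) ⊗[K] Q |
            ∃ a, ∃ _ : a < n, ∃ x : Q, w = e a ⊗ₜ x} := hspanW ▸ Submodule.mem_top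
      induction hu using Submodule.span_induction with
      | mem w hw =>
        obtain ⟨a, ha, x, rfl⟩ := hw
        rw [hΦ a ha]
        have hmem : (Ideal.Quotient.mk (Ideal.span {(X : Polynomial K) ^ (n + 1)}) (X ^ (n - a))) ⊗ₜ[K] x ∈
            LinearMap.range (TensorProduct.mk K (Polynomial K ⧸ Ideal.span {(X : Polynomial K) ^ (n + 1)}) Q
              ((Ideal.Quotient.mk (Ideal.span {(X : Polynomial K) ^ (n + 1)}) X) ^ (n - a))) :=
          ⟨x, by rw [TensorProduct.mk_apply, ← map_pow]⟩
        exact Submodule.mem_iSup_of_mem (n - a)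
          (Submodule.mem_iSup_of_mem (Finset.mem_Icc.2 ⟨by omega, by omega⟩) hmem)
      | zero => rw [map_zero]; exact Submodule.zero_mem _
      | add u v _ _ hu hv => rw [map_add]; exact Submodule.add_mem _ hu hv
      | smul c u _ hu => rw [map_smul]; exact Submodule.smul_mem _ _ hu
    · refine iSup₂_le fun c hc => ?_
      obtain ⟨hc1, hc2⟩ := Finset.mem_Icc.1 hc
      rintro w ⟨x, rfl⟩
      refine ⟨e (n - c) ⊗ₜ x, ?_⟩
      rw [hΦ (n - c) (by omega) x, TensorProduct.mk_apply, ← map_pow]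
      rw [show n - (n - c) = c by omega]
  · -- bracket
    intro u v
    have key : LinearMap.compr₂ ℓ Φ =
        LinearMap.compl₁₂ (LinearMap.mk₂ K
          (fun a b : (Polynomial K ⧸ Ideal.span {(X : Polynomial K) ^ (n + 1)}) ⊗[K] Q => ⁅a, b⁆)
          (fun m₁ m₂ m => by exact add_lie m₁ m₂ m)
          (fun c m₁ m₂ => by exact smul_lie c m₁ m₂)
          (fun m m₁ m₂ => by exact lie_add m m₁ m₂)
          (fun c m₁ m₂ => by exact lie_smul c m₁ m₂)) Φ Φ := by
      apply LinearMap.ext_on hspanW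
      rintro w ⟨a, ha, x, rfl⟩
      apply LinearMap.ext_on hspanW
      rintro w' ⟨b, hb, y, rfl⟩
      simp only [LinearMap.compr₂_apply, LinearMap.compl₁₂_apply, LinearMap.mk₂_apply]
      exact hcore a ha b hb x y
    have h := LinearMap.congr_fun (LinearMap.congr_fun key u) v
    simpa only [LinearMap.compr₂_apply, LinearMap.compl₁₂_apply, LinearMap.mk₂_apply] using h
end

section
/- Let K be a field of characteristic 0, 𝔮 a Lie algebra over K, and n ≥ 2. Let W = K[t]_{<n} ⊗_K 𝔮 and let ℓ' be the bilinear map on W determined by ℓ'(f⊗x, g⊗y) = (((fg) %ₘ (t^n − t)) − ((fg) %ₘ t^n)) ⊗ [x,y]. Then: (a) ℓ'(1⊗x, v) = 0 for all x ∈ 𝔮 and v ∈ W (the subspace K·1 ⊗ 𝔮 is central for ℓ'); (b) the subspace W₊ spanned by t^a ⊗ 𝔮 for 1 ≤ a ≤ n−1 is closed under ℓ', and the linear map σ : W₊ → (K[t]/(t^{n−1})) ⊗_K 𝔮 with σ(t^a ⊗ x) = t̄^{ n−1−a} ⊗ x (1 ≤ a ≤ n−1) is a linear bijection satisfying σ(ℓ'(u,v))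 = ⁅σ(u), σ(v)⁆ for all u, v ∈ W₊. (Thus (W, ℓ') is isomorphic to the direct sum of the Takiff algebra 𝔮⟨n−1⟩ and an abelian copy of 𝔮.) -/
open TensorProduct Polynomial

/-- The subspace `W₊ ⊂ K[t]_{<n} ⊗ 𝔮` spanned by the `t^a ⊗ 𝔮` with `1 ≤ a ≤ n-1`. -/
noncomputable def Wplus (K : Type*) [Field K] (Q : Type*) [AddCommGroup Q] [Module K Q]
    (n : ℕ) (e : ℕ → Polynomial.degreeLT K n) :
    Submodule K ((Polynomial.degreeLT K n : Submodule K (Polynomial K)) ⊗[K] Q) :=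
  ⨆ a ∈ Finset.Icc 1 (n - 1),
    LinearMap.range (TensorProduct.mk K (Polynomial.degreeLT K n : Submodule K (Polynomial K)) Q (e a))

set_option synthInstance.maxHeartbeats 1000000 in
set_option maxHeartbeats 1000000 in
/-- `(W, ℓ')`, where `ℓ' = [ , ]_{t^n-t} - [ , ]_{t^n}` on `W = K[t]_{<n} ⊗ 𝔮`, is the direct
sum of an abelian copy of `𝔮` (the central subspace `1 ⊗ 𝔮`) and the Takiff algebra
`𝔮⟨n-1⟩`, realised by `σ(t^a ⊗ x) = t̄^{n-1-a} ⊗ x` on `W₊`. -/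
theorem ell_prime_iso_takiff_plus_abelian
    (K : Type*) [Field K] [CharZero K]
    (Q : Type*) [LieRing Q] [LieAlgebra K Q]
    (n : ℕ) (hn : 2 ≤ n)
    (ℓ : ((Polynomial.degreeLT K n : Submodule K (Polynomial K)) ⊗[K] Q) →ₗ[K]
      ((Polynomial.degreeLT K n : Submodule K (Polynomial K)) ⊗[K] Q) →ₗ[K]
      ((Polynomial.degreeLT K n : Submodule K (Polynomial K)) ⊗[K] Q))
    (hℓ : ∀ (f g : Polynomial.degreeLT K n) (x y : Q),
      (LinearMap.rTensor Q (Polynomial.degreeLT K n).subtype) (ℓ (f ⊗ₜ x) (g ⊗ₜ y)) =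
        ((((f : Polynomial K) * (g : Polynomial K)) %ₘ (X ^ n - X) -
          ((f : Polynomial K) * (g : Polynomial K)) %ₘ (X ^ n : Polynomial K)) ⊗ₜ ⁅x, y⁆))
    (e : ℕ → Polynomial.degreeLT K n)
    (he : ∀ a, a < n → ((e a : Polynomial K) = X ^ a))
    (σ : (Wplus K Q n e) →ₗ[K]
      (Polynomial K ⧸ Ideal.span {(X : Polynomial K) ^ (n - 1)}) ⊗[K] Q)
    (hσ : ∀ (a : ℕ), 1 ≤ a → a ≤ n - 1 → ∀ (x : Q) (w : Wplus K Q n e),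
      (w : (Polynomial.degreeLT K n : Submodule K (Polynomial K)) ⊗[K] Q) = e a ⊗ₜ x →
      σ w = (Ideal.Quotient.mk (Ideal.span {(X : Polynomial K) ^ (n - 1)}) (X ^ (n - 1 - a))) ⊗ₜ x) :
    (∀ (x : Q) (v : (Polynomial.degreeLT K n : Submodule K (Polynomial K)) ⊗[K] Q),
      ℓ (e 0 ⊗ₜ x) v = 0) ∧
    (∀ u v, u ∈ Wplus K Q n e → v ∈ Wplus K Q n e → ℓ u v ∈ Wplus K Q n e) ∧
    Function.Bijective σ ∧
    (∀ (u v w : Wplus K Q n e),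
      (w : (Polynomial.degreeLT K n : Submodule K (Polynomial K)) ⊗[K] Q) = ℓ u v →
      σ w = ⁅σ u, σ v⁆) := by
  classical
  have h1n : (1 : ℕ) < n := by omega
  -- injectivity of the canonical map W → K[X] ⊗ Q
  have hJ : Function.Injective
      (LinearMap.rTensor Q (Polynomial.degreeLT K n).subtype) :=
    Module.Flat.rTensor_preserves_injective_linearMap _ (Submodule.injective_subtype _)
  -- monicity and degree facts
  have hmT : ((X:K[X])^n - X).Monic :=
    monic_X_pow_sub (by rw [degree_X]; exact_mod_cast h1n)
  have hdeg : ((X:K[X])^n - X).degree = (n : WithBot ℕ) := by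
    rw [degree_sub_eq_left_of_degree_lt
      (by rw [degree_X_pow, degree_X]; exact_mod_cast h1n), degree_X_pow]
  have hmodlt : ∀ p : K[X], p.degree < (n : WithBot ℕ) →
      p %ₘ ((X:K[X])^n - X) = p ∧ p %ₘ ((X:K[X])^n) = p := by
    intro p hp
    exact ⟨(modByMonic_eq_self_iff hmT).mpr (by rw [hdeg]; exact hp),
      (modByMonic_eq_self_iff (monic_X_pow n)).mpr (by rw [degree_X_pow]; exact hp)⟩
  -- the bracket on pure tensors
  have hpure_lt : ∀ a b (x y : Q), a + b < n → ℓ (e a ⊗ₜ x) (e b ⊗ₜ y) = 0 := by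
    intro a b x y hab
    apply hJ
    rw [hℓ, map_zero, he a (by omega), he b (by omega), ← pow_add,
      (hmodlt _ (by rw [degree_X_pow]; exact_mod_cast hab)).1,
      (hmodlt _ (by rw [degree_X_pow]; exact_mod_cast hab)).2, sub_self,
      TensorProduct.zero_tmul]
  have hpure_ge : ∀ a b (x y : Q), a ≤ n - 1 → b ≤ n - 1 → n ≤ a + b →
      ℓ (e a ⊗ₜ x) (e b ⊗ₜ y) = e (a + b - n + 1) ⊗ₜ ⁅x, y⁆ := by
    intro a b x y ha hb hab
    obtain ⟨k, hk⟩ : ∃ k, a + b = n + k := ⟨a + b - n, by omega⟩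
    have hkn : k + 1 < n := by omega
    have h3 : (X:K[X])^(n+k) = X^(k+1) + ((X:K[X])^n - X) * X^k := by
      rw [sub_mul, ← pow_add, ← pow_succ']; ring
    have e1 : (X:K[X])^(n+k) %ₘ ((X:K[X])^n - X) = X^(k+1) := by
      rw [h3, add_modByMonic, self_mul_modByMonic hmT, add_zero,
        (modByMonic_eq_self_iff hmT).mpr (by rw [hdeg, degree_X_pow]; exact_mod_cast hkn)]
    have e2 : (X:K[X])^(n+k) %ₘ ((X:K[X])^n) = 0 :=
      (modByMonic_eq_zero_iff_dvd (monic_X_pow n)).mpr (pow_dvd_pow X (by omega))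
    apply hJ
    rw [hℓ, LinearMap.rTensor_tmul, Submodule.subtype_apply, he a (by omega),
      he b (by omega), he (a + b - n + 1) (by omega), ← pow_add, hk, e1, e2, sub_zero,
      show n + k - n + 1 = k + 1 by omega]
  -- part (a)
  have hA : ∀ (x : Q) (v : (Polynomial.degreeLT K n : Submodule K (Polynomial K)) ⊗[K] Q),
      ℓ (e 0 ⊗ₜ x) v = 0 := by
    intro x v
    induction v using TensorProduct.induction_on with
    | zero => exact map_zero _
    | add v1 v2 ih1 ih2 => rw [map_add, ih1, ih2, add_zero]
    | tmul g y =>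
      apply hJ
      rw [hℓ, map_zero, he 0 (by omega), pow_zero, one_mul,
        (hmodlt _ (mem_degreeLT.mp g.2)).1, (hmodlt _ (mem_degreeLT.mp g.2)).2, sub_self,
        TensorProduct.zero_tmul]
  -- span description of Wplus
  set S : Set ((Polynomial.degreeLT K n : Submodule K (Polynomial K)) ⊗[K] Q) :=
    {z | ∃ (a : ℕ) (x : Q), 1 ≤ a ∧ a ≤ n - 1 ∧ z = (e a) ⊗ₜ[K] x} with hS
  have hWspan : Wplus K Q n e = Submodule.span K S := by
    apply le_antisymm
    · apply iSup₂_le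
      intro a ha
      rintro z ⟨x, rfl⟩
      obtain ⟨ha1, ha2⟩ := Finset.mem_Icc.mp ha
      exact Submodule.subset_span ⟨a, x, ha1, ha2, rfl⟩
    · rw [Submodule.span_le]
      rintro z ⟨a, x, ha1, ha2, rfl⟩
      apply Submodule.mem_iSup_of_mem a
      apply Submodule.mem_iSup_of_mem (Finset.mem_Icc.mpr ⟨ha1, ha2⟩)
      exact ⟨x, rfl⟩
  have hmem : ∀ a (x : Q), 1 ≤ a → a ≤ n - 1 → (e a) ⊗ₜ[K] x ∈ Wplus K Q n e := by
    intro a x h1 h2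
    rw [hWspan]
    exact Submodule.subset_span ⟨a, x, h1, h2, rfl⟩
  -- part (b)
  have hB : ∀ u v, u ∈ Wplus K Q n e → v ∈ Wplus K Q n e → ℓ u v ∈ Wplus K Q n e := by
    intro u v hu hv
    rw [hWspan] at hu hv ⊢
    induction hu, hv using Submodule.span_induction₂ with
    | mem_mem u v hu hv =>
      obtain ⟨a, x, ha1, ha2, rfl⟩ := hu
      obtain ⟨b, y, hb1, hb2, rfl⟩ := hv
      by_cases hab : n ≤ a + b
      · rw [hpure_ge a b x y ha2 hb2 hab]
        exact Submodule.subset_span ⟨a + b - n + 1, ⁅x, y⁆, by omega, by omega, rfl⟩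
      · rw [hpure_lt a b x y (by omega)]
        exact zero_mem _
    | zero_left v hv => rw [map_zero, LinearMap.zero_apply]; exact zero_mem _
    | zero_right u hu => rw [map_zero]; exact zero_mem _
    | add_left u₁ u₂ v h1 h2 h3 ih1 ih2 =>
      rw [map_add, LinearMap.add_apply]; exact add_mem ih1 ih2
    | add_right u v₁ v₂ h1 h2 h3 ih1 ih2 =>
      rw [map_add]; exact add_mem ih1 ih2
    | smul_left c u v h1 h2 ih =>
      rw [map_smul, LinearMap.smul_apply]; exact Submodule.smul_mem _ _ ih
    | smul_right c u v h1 h2 ih =>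
      rw [map_smul]; exact Submodule.smul_mem _ _ ih
  -- the inverse map
  have hXne : ((X:K[X])^(n-1)) ≠ 0 := pow_ne_zero _ X_ne_zero
  let pb := AdjoinRoot.powerBasis hXne
  let φ : (Polynomial K ⧸ Ideal.span {(X:Polynomial K)^(n-1)}) →ₗ[K]
      (Polynomial.degreeLT K n : Submodule K (Polynomial K)) :=
    pb.basis.constr K (fun i => e (n - 1 - (i:ℕ)))
  have hd : pb.dim = n - 1 := by simp [pb, AdjoinRoot.powerBasis_dim, natDegree_X_pow]
  have hφ : ∀ j, j < n - 1 → φ (Ideal.Quotient.mk _ ((X:K[X])^j)) = e (n-1-j) := by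
    intro j hj
    have hj' : j < pb.dim := by omega
    have hb : pb.basis ⟨j, hj'⟩
        = (Ideal.Quotient.mk (Ideal.span {(X:K[X])^(n-1)}) ((X:K[X])^j)) := by
      rw [pb.coe_basis]
      show (Ideal.Quotient.mk (Ideal.span {(X:K[X])^(n-1)}) X)^j = _
      rw [← map_pow]
    have h2 := pb.basis.constr_basis K (fun i => e (n - 1 - (i:ℕ))) ⟨j, hj'⟩
    rw [hb] at h2
    exact h2
  have hmk0 : ∀ j, n - 1 ≤ j →
      Ideal.Quotient.mk (Ideal.span {(X:K[X])^(n-1)}) ((X:K[X])^j) = 0 := fun j hj =>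
    Ideal.Quotient.eq_zero_iff_mem.mpr (Ideal.mem_span_singleton.mpr (pow_dvd_pow _ hj))
  let τ : ((Polynomial K ⧸ Ideal.span {(X:Polynomial K)^(n-1)}) ⊗[K] Q) →ₗ[K]
      ((Polynomial.degreeLT K n : Submodule K (Polynomial K)) ⊗[K] Q) :=
    LinearMap.rTensor Q φ
  -- σ is injective
  have key1 : ∀ (z) (hz : z ∈ Submodule.span K S) (w : Wplus K Q n e),
      (w : (Polynomial.degreeLT K n : Submodule K (Polynomial K)) ⊗[K] Q) = z →
      τ (σ w) = z := by
    intro z hz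
    induction hz using Submodule.span_induction with
    | mem z h =>
      obtain ⟨a, x, h1, h2, rfl⟩ := h
      intro w hw
      rw [hσ a h1 h2 x w hw]
      show (LinearMap.rTensor Q φ) _ = _
      rw [LinearMap.rTensor_tmul, hφ (n-1-a) (by omega), show n - 1 - (n-1-a) = a by omega]
    | zero =>
      intro w hw
      have : w = 0 := Subtype.ext hw
      rw [this, map_zero, map_zero]
    | add z1 z2 h1 h2 ih1 ih2 =>
      intro w hw
      have m1 : z1 ∈ Wplus K Q n e := by rw [hWspan]; exact h1
      have m2 : z2 ∈ Wplus K Q n e := by rw [hWspan]; exact h2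
      have : w = ⟨z1, m1⟩ + ⟨z2, m2⟩ := Subtype.ext hw
      rw [this, map_add, map_add, ih1 _ rfl, ih2 _ rfl]
    | smul c z hz ih =>
      intro w hw
      have m : z ∈ Wplus K Q n e := by rw [hWspan]; exact hz
      have : w = c • ⟨z, m⟩ := Subtype.ext hw
      rw [this, map_smul, map_smul, ih _ rfl]
  have hinj : Function.Injective σ := by
    intro w1 w2 h
    have k1 := key1 w1.1 (by rw [← hWspan]; exact w1.2) w1 rfl
    have k2 := key1 w2.1 (by rw [← hWspan]; exact w2.2) w2 rfl
    exact Subtype.ext (by rw [← k1, ← k2, h])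
  -- σ is surjective
  have hXk : ∀ (k : ℕ) (x : Q),
      (Ideal.Quotient.mk (Ideal.span {(X:K[X])^(n-1)}) ((X:K[X])^k)) ⊗ₜ[K] x
        ∈ LinearMap.range σ := by
    intro k x
    by_cases hk : k < n - 1
    · refine ⟨⟨e (n-1-k) ⊗ₜ x, hmem _ x (by omega) (by omega)⟩, ?_⟩
      rw [hσ (n-1-k) (by omega) (by omega) x _ rfl, show n - 1 - (n-1-k) = k by omega]
    · rw [hmk0 k (by omega), TensorProduct.zero_tmul]
      exact zero_mem _
  have hrange : ∀ z : ((Polynomial K ⧸ Ideal.span {(X:Polynomial K)^(n-1)}) ⊗[K] Q),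
      z ∈ LinearMap.range σ := by
    intro z
    induction z using TensorProduct.induction_on with
    | zero => exact zero_mem _
    | add z1 z2 ih1 ih2 => exact add_mem ih1 ih2
    | tmul q x =>
      obtain ⟨p, rfl⟩ := Ideal.Quotient.mk_surjective q
      induction p using Polynomial.induction_on' with
      | add p1 p2 ih1 ih2 =>
        rw [map_add, TensorProduct.add_tmul]; exact add_mem ih1 ih2
      | monomial k c =>
        rw [← Polynomial.smul_X_eq_monomial, ← Ideal.Quotient.mkₐ_eq_mk K, map_smul,
          ← TensorProduct.smul_tmul', Ideal.Quotient.mkₐ_eq_mk K]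
        exact Submodule.smul_mem _ _ (hXk k x)
  have hsurj : Function.Surjective σ := fun z => hrange z
  -- bracket helper lemmas with the ambient Bracket instance
  have addlie : ∀ (p q r : (Polynomial K ⧸ Ideal.span {(X : Polynomial K) ^ (n - 1)}) ⊗[K] Q),
      ⁅p + q, r⁆ = ⁅p, r⁆ + ⁅q, r⁆ := fun p q r =>
    add_lie (M := (Polynomial K ⧸ Ideal.span {(X : Polynomial K) ^ (n - 1)}) ⊗[K] Q) p q r
  have lieadd : ∀ (p q r : (Polynomial K ⧸ Ideal.span {(X : Polynomial K) ^ (n - 1)}) ⊗[K] Q),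
      ⁅p, q + r⁆ = ⁅p, q⁆ + ⁅p, r⁆ := fun p q r =>
    lie_add (M := (Polynomial K ⧸ Ideal.span {(X : Polynomial K) ^ (n - 1)}) ⊗[K] Q) p q r
  have smullie : ∀ (c : K) (p r : (Polynomial K ⧸ Ideal.span {(X : Polynomial K) ^ (n - 1)}) ⊗[K] Q),
      ⁅c • p, r⁆ = c • ⁅p, r⁆ := fun c p r =>
    smul_lie (M := (Polynomial K ⧸ Ideal.span {(X : Polynomial K) ^ (n - 1)}) ⊗[K] Q) c p r
  have liesmul : ∀ (c : K) (p r : (Polynomial K ⧸ Ideal.span {(X : Polynomial K) ^ (n - 1)}) ⊗[K] Q),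
      ⁅p, c • r⁆ = c • ⁅p, r⁆ := fun c p r =>
    lie_smul (M := (Polynomial K ⧸ Ideal.span {(X : Polynomial K) ^ (n - 1)}) ⊗[K] Q) c p r
  have zerolie : ∀ (r : (Polynomial K ⧸ Ideal.span {(X : Polynomial K) ^ (n - 1)}) ⊗[K] Q),
      ⁅(0 : (Polynomial K ⧸ Ideal.span {(X : Polynomial K) ^ (n - 1)}) ⊗[K] Q), r⁆ = 0 :=
    fun r => zero_lie (L := (Polynomial K ⧸ Ideal.span {(X : Polynomial K) ^ (n - 1)}) ⊗[K] Q)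
      (M := (Polynomial K ⧸ Ideal.span {(X : Polynomial K) ^ (n - 1)}) ⊗[K] Q) r
  have liezero : ∀ (p : (Polynomial K ⧸ Ideal.span {(X : Polynomial K) ^ (n - 1)}) ⊗[K] Q),
      ⁅p, (0 : (Polynomial K ⧸ Ideal.span {(X : Polynomial K) ^ (n - 1)}) ⊗[K] Q)⁆ = 0 :=
    fun p => lie_zero (M := (Polynomial K ⧸ Ideal.span {(X : Polynomial K) ^ (n - 1)}) ⊗[K] Q) p
  -- part (d)
  have hD' : ∀ (z1 z2) (h1 : z1 ∈ Submodule.span K S) (h2 : z2 ∈ Submodule.span K S),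
      ∀ (w u v : Wplus K Q n e),
      (u : (Polynomial.degreeLT K n : Submodule K (Polynomial K)) ⊗[K] Q) = z1 →
      (v : (Polynomial.degreeLT K n : Submodule K (Polynomial K)) ⊗[K] Q) = z2 →
      (w : (Polynomial.degreeLT K n : Submodule K (Polynomial K)) ⊗[K] Q) = ℓ z1 z2 →
      σ w = ⁅σ u, σ v⁆ := by
    intro z1 z2 h1 h2
    induction h1, h2 using Submodule.span_induction₂ with
    | mem_mem z1 z2 hz1 hz2 =>
      obtain ⟨a, x, ha1, ha2, rfl⟩ := hz1
      obtain ⟨b, y, hb1, hb2, rfl⟩ := hz2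
      intro w u v hu hv hw
      rw [hσ a ha1 ha2 x u hu, hσ b hb1 hb2 y v hv,
        LieAlgebra.ExtendScalars.bracket_tmul, ← map_mul, ← pow_add]
      by_cases hab : n ≤ a + b
      · rw [hσ (a+b-n+1) (by omega) (by omega) ⁅x, y⁆ w
            (by rw [hw, hpure_ge a b x y ha2 hb2 hab]),
          show n - 1 - (a+b-n+1) = n - 1 - a + (n - 1 - b) by omega]
      · have hw0 : w = 0 := by
          apply Subtype.ext
          rw [hw, hpure_lt a b x y (by omega)]; rfl
        rw [hw0, map_zero, hmk0 (n - 1 - a + (n - 1 - b)) (by omega),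
          TensorProduct.zero_tmul]
    | zero_left z2 hz2 =>
      intro w u v hu hv hw
      have hw0 : w = 0 := Subtype.ext (by rw [hw, map_zero, LinearMap.zero_apply]; rfl)
      have hu0 : u = 0 := Subtype.ext (by rw [hu]; rfl)
      rw [hw0, hu0, map_zero, zerolie]
    | zero_right z1 hz1 =>
      intro w u v hu hv hw
      have hw0 : w = 0 := Subtype.ext (by rw [hw, map_zero]; rfl)
      have hv0 : v = 0 := Subtype.ext (by rw [hv]; rfl)
      rw [hw0, hv0, map_zero, liezero]
    | add_left zA zB zC hA' hB' hC' ih1 ih2 =>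
      intro w u v hu hv hw
      have mA : zA ∈ Wplus K Q n e := by rw [hWspan]; exact hA'
      have mB : zB ∈ Wplus K Q n e := by rw [hWspan]; exact hB'
      have mC : zC ∈ Wplus K Q n e := by rw [hWspan]; exact hC'
      have m1 : ℓ zA zC ∈ Wplus K Q n e := hB _ _ mA mC
      have m2 : ℓ zB zC ∈ Wplus K Q n e := hB _ _ mB mC
      have hw' : w = ⟨ℓ zA zC, m1⟩ + ⟨ℓ zB zC, m2⟩ :=
        Subtype.ext (by rw [hw, map_add, LinearMap.add_apply]; rfl)
      have hu' : u = ⟨zA, mA⟩ + ⟨zB, mB⟩ := Subtype.ext (by rw [hu]; rfl)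
      rw [hw', map_add, ih1 ⟨ℓ zA zC, m1⟩ ⟨zA, mA⟩ v rfl hv rfl,
        ih2 ⟨ℓ zB zC, m2⟩ ⟨zB, mB⟩ v rfl hv rfl, hu', map_add, addlie]
    | add_right zA zB zC hA' hB' hC' ih1 ih2 =>
      intro w u v hu hv hw
      have mA : zA ∈ Wplus K Q n e := by rw [hWspan]; exact hA'
      have mB : zB ∈ Wplus K Q n e := by rw [hWspan]; exact hB'
      have mC : zC ∈ Wplus K Q n e := by rw [hWspan]; exact hC'
      have m1 : ℓ zA zB ∈ Wplus K Q n e := hB _ _ mA mB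
      have m2 : ℓ zA zC ∈ Wplus K Q n e := hB _ _ mA mC
      have hw' : w = ⟨ℓ zA zB, m1⟩ + ⟨ℓ zA zC, m2⟩ :=
        Subtype.ext (by rw [hw, map_add]; rfl)
      have hv' : v = ⟨zB, mB⟩ + ⟨zC, mC⟩ := Subtype.ext (by rw [hv]; rfl)
      rw [hw', map_add, ih1 ⟨ℓ zA zB, m1⟩ u ⟨zB, mB⟩ hu rfl rfl,
        ih2 ⟨ℓ zA zC, m2⟩ u ⟨zC, mC⟩ hu rfl rfl, hv', map_add, lieadd]
    | smul_left c zA zB hA' hB' ih =>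
      intro w u v hu hv hw
      have mA : zA ∈ Wplus K Q n e := by rw [hWspan]; exact hA'
      have mB : zB ∈ Wplus K Q n e := by rw [hWspan]; exact hB'
      have m1 : ℓ zA zB ∈ Wplus K Q n e := hB _ _ mA mB
      have hw' : w = c • ⟨ℓ zA zB, m1⟩ :=
        Subtype.ext (by rw [hw, map_smul, LinearMap.smul_apply]; rfl)
      have hu' : u = c • ⟨zA, mA⟩ := Subtype.ext (by rw [hu]; rfl)
      rw [hw', map_smul, ih ⟨ℓ zA zB, m1⟩ ⟨zA, mA⟩ v rfl hv rfl, hu', map_smul, smullie]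
    | smul_right c zA zB hA' hB' ih =>
      intro w u v hu hv hw
      have mA : zA ∈ Wplus K Q n e := by rw [hWspan]; exact hA'
      have mB : zB ∈ Wplus K Q n e := by rw [hWspan]; exact hB'
      have m1 : ℓ zA zB ∈ Wplus K Q n e := hB _ _ mA mB
      have hw' : w = c • ⟨ℓ zA zB, m1⟩ :=
        Subtype.ext (by rw [hw, map_smul]; rfl)
      have hv' : v = c • ⟨zB, mB⟩ := Subtype.ext (by rw [hv]; rfl)
      rw [hw', map_smul, ih ⟨ℓ zA zB, m1⟩ u ⟨zB, mB⟩ hu rfl rfl, hv', map_smul, liesmul]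
  have hD : ∀ (u v w : Wplus K Q n e),
      (w : (Polynomial.degreeLT K n : Submodule K (Polynomial K)) ⊗[K] Q) = ℓ u v →
      σ w = ⁅σ u, σ v⁆ := by
    intro u v w hw
    exact hD' u.1 v.1 (by rw [← hWspan]; exact u.2) (by rw [← hWspan]; exact v.2)
      w u v rfl rfl hw
  exact ⟨hA, hB, ⟨hinj, hsurj⟩, hD⟩
end
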